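/- arXiv:2406.09075 — 12 statements merged into one kernel-verified Lean document; each statement's English description precedes it below -/
import Mathlib

section
/- Let (A, B) be an α-valuation of the complete bipartite graph K_{a,b} with ab > 1, let x = max A, and let ℓ ≥ 2 be an integer such that x+1 ∈ B and x+ℓ+1 ∈ B. Then A contains no set of ℓ+1 consecutive integers; that is, no run of A has length greater than ℓ. -/
/-- An α-valuation of the complete bipartite graph `K_{a,b}`, identified with a pair
`(A, B)` of finite sets of nonnegative integers: `|A| = a`, `|B| = b`, every element of `A`
is strictly less than every element of `B`, and the `a*b` differences `y - z` with `y ∈ B`,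
`z ∈ A` are pairwise distinct and are exactly the integers `1, 2, ..., a*b`. -/
def IsAlphaValuation (a b : ℕ) (A B : Finset ℕ) : Prop :=
  0 < a ∧ 0 < b ∧ A.card = a ∧ B.card = b ∧
  (∀ z ∈ A, ∀ y ∈ B, z < y) ∧
  Set.InjOn (fun p : ℕ × ℕ => p.1 - p.2) ↑(B ×ˢ A) ∧
  (B ×ˢ A).image (fun p : ℕ × ℕ => p.1 - p.2) = Finset.Icc 1 (a * b)
theorem stmt_3 (a b ℓ : ℕ) (A B : Finset ℕ) (h : IsAlphaValuation a b A B)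
    (hab : 1 < a * b) (x : ℕ) (hxA : x ∈ A) (hxmax : ∀ z ∈ A, z ≤ x)
    (hℓ : 2 ≤ ℓ) (h1 : x + 1 ∈ B) (h2 : x + ℓ + 1 ∈ B) :
    ¬ ∃ c : ℕ, ∀ j : ℕ, j ≤ ℓ → c + j ∈ A := by
  rintro ⟨c, hc⟩
  obtain ⟨-, -, -, -, hlt, hinj, -⟩ := h
  have hc0 : c ∈ A := by simpa using hc 0 (by omega)
  have hcl : c + ℓ ∈ A := hc ℓ le_rfl
  have hcx : c + ℓ ≤ x := hxmax _ hcl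
  have hm1 : ((x + 1 : ℕ), c) ∈ (↑(B ×ˢ A) : Set (ℕ × ℕ)) := by
    simp [Finset.mem_product, h1, hc0]
  have hm2 : ((x + ℓ + 1 : ℕ), c + ℓ) ∈ (↑(B ×ˢ A) : Set (ℕ × ℕ)) := by
    simp [Finset.mem_product, h2, hcl]
  have heq : (x + 1) - c = (x + ℓ + 1) - (c + ℓ) := by omega
  have := hinj hm1 hm2 heq
  have : (x + 1 : ℕ) = x + ℓ + 1 := congrArg Prod.fst this
  omega
end

section
/- Let (A, B) be an α-valuation of the complete bipartite graph K_{a,b} with ab > 1, let x = max A, and let ℓ ≥ 2 be an integer such that: x+1 ∈ B and x+ℓ+1 ∈ B; x+j ∉ B for 2 ≤ j ≤ ℓ; x−j ∈ A for 1 ≤ j ≤ ℓ−1; and x−ℓ ∉ A. Then every run of A has length exactly ℓ; that is, every element of A belongs to a set of exactly ℓ consecutive integers all contained in A whose predecessor and successor are not in A. -/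
theorem stmt_4 (a b ℓ : ℕ) (A B : Finset ℕ) (h : IsAlphaValuation a b A B)
    (hab : 1 < a * b) (x : ℕ) (hxA : x ∈ A) (hxmax : ∀ z ∈ A, z ≤ x)
    (hℓ : 2 ≤ ℓ)
    (h1 : x + 1 ∈ B) (h2 : x + ℓ + 1 ∈ B)
    (h3 : ∀ j : ℕ, 2 ≤ j → j ≤ ℓ → x + j ∉ B)
    (h4 : ∀ j : ℕ, 1 ≤ j → j ≤ ℓ - 1 → ∃ z ∈ A, (z : ℤ) = (x : ℤ) - (j : ℤ))
    (h5 : ¬ ∃ z ∈ A, (z : ℤ) = (x : ℤ) - (ℓ : ℤ)) :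
    ∀ z ∈ A, ∃ c : ℕ, c ≤ z ∧ z < c + ℓ ∧
      (∀ j : ℕ, j < ℓ → c + j ∈ A) ∧ c + ℓ ∉ A ∧
      (∀ w ∈ A, (w : ℤ) ≠ (c : ℤ) - 1) := by
  obtain ⟨ha, hb, hcA, hcB, hlt, hinj, himg⟩ := h
  obtain ⟨N, hN⟩ : ∃ N, a * b = N := ⟨_, rfl⟩
  rw [hN] at himg hab
  have hℓ0 : 0 < ℓ := by omega
  -- unique representation of differences
  have huniq : ∀ {y u y' u' d : ℕ}, y ∈ B → u ∈ A → y' ∈ B → u' ∈ A →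
      y = u + d → y' = u' + d → y = y' ∧ u = u' := by
    intro y u y' u' d hy hu hy' hu' e e'
    have hm1 : ((y, u) : ℕ × ℕ) ∈ (↑(B ×ˢ A) : Set (ℕ × ℕ)) :=
      Finset.mem_coe.mpr (Finset.mem_product.mpr ⟨hy, hu⟩)
    have hm2 : ((y', u') : ℕ × ℕ) ∈ (↑(B ×ˢ A) : Set (ℕ × ℕ)) :=
      Finset.mem_coe.mpr (Finset.mem_product.mpr ⟨hy', hu'⟩)
    have heq := hinj hm1 hm2 (show y - u = y' - u' by omega)
    rw [Prod.mk.injEq] at heq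
    exact heq
  have hmem_diff : ∀ y ∈ B, ∀ u ∈ A, ∃ d, y = u + d ∧ 1 ≤ d ∧ d ≤ N := by
    intro y hy u hu
    have huy : u < y := hlt u hu y hy
    have hmem : y - u ∈ Finset.Icc 1 N := by
      rw [← himg]
      exact Finset.mem_image.mpr ⟨(y, u), Finset.mem_product.mpr ⟨hy, hu⟩, rfl⟩
    rw [Finset.mem_Icc] at hmem
    exact ⟨y - u, by omega, hmem.1, hmem.2⟩
  have hex : ∀ d, 1 ≤ d → d ≤ N → ∃ y ∈ B, ∃ u ∈ A, y = u + d := by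
    intro d hd1 hd2
    have hmem : d ∈ (B ×ˢ A).image (fun p : ℕ × ℕ => p.1 - p.2) := by
      rw [himg]; exact Finset.mem_Icc.mpr ⟨hd1, hd2⟩
    obtain ⟨p, hp, hpd⟩ := Finset.mem_image.mp hmem
    rw [Finset.mem_product] at hp
    have hlt' := hlt p.2 hp.2 p.1 hp.1
    have hpd' : p.1 - p.2 = d := hpd
    exact ⟨p.1, hp.1, p.2, hp.2, by omega⟩
  -- the top run of A
  have htop : ∀ j, j + 1 ≤ ℓ → ∃ u ∈ A, u + j = x := by
    intro j hj
    rcases Nat.eq_zero_or_pos j with h0 | h0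
    · exact ⟨x, hxA, by omega⟩
    · obtain ⟨u, hu, hue⟩ := h4 j h0 (by omega)
      exact ⟨u, hu, by omega⟩
  -- no two elements of A differ by exactly ℓ
  have hF2 : ∀ u ∈ A, ∀ v ∈ A, v + ℓ = u → False := by
    intro u hu v hv hvl
    have hvx : v ≤ x := hxmax v hv
    have e1 : x + ℓ + 1 = u + (x + 1 - v) := by omega
    have e2 : x + 1 = v + (x + 1 - v) := by omega
    have := (huniq h2 hu h1 hv e1 e2).1
    omega
  -- reflection lemma
  have hH : ∀ y ∈ B, ∀ w ∈ A, y + w = 2 * x + 2 → y = x + ℓ + 1 := by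
    intro y hy w hw hyw
    obtain ⟨t, ht, htx⟩ := htop (ℓ - 1) (by omega)
    have hxy : x < y := hlt x hxA y hy
    have hwx : w ≤ x := hxmax w hw
    have e1 : y = t + (y + ℓ - 1 - x) := by omega
    have e2 : x + ℓ + 1 = w + (y + ℓ - 1 - x) := by omega
    exact (huniq hy ht h2 hw e1 e2).1
  -- range bound for exponents
  have hrangeP : ∀ k : ℕ, (∃ u ∈ A, u + k = x) → k + ℓ + 1 ≤ N := by
    rintro k ⟨u, hu, hue⟩
    obtain ⟨d, hd1, hd2, hd3⟩ := hmem_diff (x + ℓ + 1) h2 u hu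
    omega
  -- main structural induction
  have hT : ∀ k, 1 ≤ k → k + 1 ≤ N → ¬ ℓ ∣ k →
      ((x + 1 + k) ∉ B ∧ ((∃ u ∈ A, u + k = x) ↔ ∃ u ∈ A, u + (k - 1) = x)) := by
    intro k
    induction k using Nat.strong_induction_on with
    | _ k IH =>
      intro hk1 hkN hknd
      have hQ : (x + 1 + k) ∉ B := by
        intro hyB
        have hnw : ¬ ∃ w ∈ A, w + (k - 1) = x := by
          rintro ⟨w, hw, hwk⟩
          have hwx : w ≤ x := hxmax w hw
          have hyl := hH _ hyB _ hw (by omega)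
          have hkeq : k = ℓ := by omega
          exact hknd (by rw [hkeq])
        obtain ⟨y, hy, u, hu, hyu⟩ := hex k hk1 (by omega)
        have hux : u ≤ x := hxmax u hu
        have hxy : x < y := hlt x hxA y hy
        by_cases hy1 : y = x + 1
        · exact hnw ⟨u, hu, by omega⟩
        · have hj1 : 1 ≤ y - x - 1 := by omega
          have hjk : y - x - 1 < k := by omega
          have hjd : ℓ ∣ (y - x - 1) := by
            by_contra hjnd
            have hnB := (IH _ hjk hj1 (by omega) hjnd).1
            have hyy : x + 1 + (y - x - 1) = y := by omega
            rw [hyy] at hnB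
            exact hnB hy
          have hkjnd : ¬ ℓ ∣ (k - (y - x - 1)) := by
            intro hd
            refine hknd ?_
            have hk' : k = (k - (y - x - 1)) + (y - x - 1) := by omega
            rw [hk']
            exact Nat.dvd_add hd hjd
          obtain ⟨u', hu', hu'e⟩ :=
            (IH (k - (y - x - 1)) (by omega) (by omega) (by omega) hkjnd).2.mpr
              ⟨u, hu, by omega⟩
          have he1 : y = u' + (k + 1) := by omega
          have he2 : x + 1 + k = x + (k + 1) := by omega
          obtain ⟨hA1, hA2⟩ := huniq hy hu' hyB hxA he1 he2
          omega
      refine ⟨hQ, ?_, ?_⟩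
      · rintro ⟨v, hv, hvk⟩
        obtain ⟨y, hy, u, hu, hyu⟩ := hex k hk1 (by omega)
        have hux : u ≤ x := hxmax u hu
        have hxy : x < y := hlt x hxA y hy
        by_cases hy1 : y = x + 1
        · exact ⟨u, hu, by omega⟩
        · exfalso
          have hj1 : 1 ≤ y - x - 1 := by omega
          have hjk : y - x - 1 < k := by omega
          have hjd : ℓ ∣ (y - x - 1) := by
            by_contra hjnd
            have hnB := (IH _ hjk hj1 (by omega) hjnd).1
            have hyy : x + 1 + (y - x - 1) = y := by omega
            rw [hyy] at hnB
            exact hnB hy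
          have hkjnd : ¬ ℓ ∣ (k - (y - x - 1)) := by
            intro hd
            refine hknd ?_
            have hk' : k = (k - (y - x - 1)) + (y - x - 1) := by omega
            rw [hk']
            exact Nat.dvd_add hd hjd
          obtain ⟨u', hu', hu'e⟩ :=
            (IH (k - (y - x - 1)) (by omega) (by omega) (by omega) hkjnd).2.mpr
              ⟨u, hu, by omega⟩
          have he1 : y = u' + (k + 1) := by omega
          have he2 : x + 1 = v + (k + 1) := by omega
          obtain ⟨hA1, hA2⟩ := huniq hy hu' h1 hv he1 he2
          omega
      · rintro ⟨w, hw, hwk⟩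
        obtain ⟨y, hy, u, hu, hyu⟩ := hex (k + 1) (by omega) hkN
        have hux : u ≤ x := hxmax u hu
        have hxy : x < y := hlt x hxA y hy
        by_cases hy1 : y = x + 1
        · exact ⟨u, hu, by omega⟩
        · exfalso
          by_cases hux' : u = x
          · have hyy : x + 1 + k = y := by omega
            rw [hyy] at hQ
            exact hQ hy
          · have hj1 : 1 ≤ y - x - 1 := by omega
            have hjk : y - x - 1 < k := by omega
            have hjd : ℓ ∣ (y - x - 1) := by
              by_contra hjnd
              have hnB := (IH _ hjk hj1 (by omega) hjnd).1
              have hyy : x + 1 + (y - x - 1) = y := by omega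
              rw [hyy] at hnB
              exact hnB hy
            have hkjnd : ¬ ℓ ∣ (k - (y - x - 1)) := by
              intro hd
              refine hknd ?_
              have hk' : k = (k - (y - x - 1)) + (y - x - 1) := by omega
              rw [hk']
              exact Nat.dvd_add hd hjd
            obtain ⟨u', hu', hu'e⟩ :=
              (IH (k - (y - x - 1)) (by omega) (by omega) (by omega) hkjnd).2.mp
                ⟨u, hu, by omega⟩
            have he1 : y = u' + k := by omega
            have he2 : x + 1 = w + k := by omega
            obtain ⟨hA1, hA2⟩ := huniq hy hu' h1 hw he1 he2
            omega
  -- assemble the block structure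
  intro z hz
  have hzx : z ≤ x := hxmax z hz
  obtain ⟨m, r, hrl, hmr⟩ : ∃ m r, r < ℓ ∧ x - z = m * ℓ + r :=
    ⟨(x - z) / ℓ, (x - z) % ℓ, Nat.mod_lt _ hℓ0,
      by rw [Nat.mul_comm]; exact (Nat.div_add_mod (x - z) ℓ).symm⟩
  obtain ⟨M, hM⟩ : ∃ M, m * ℓ = M := ⟨_, rfl⟩
  rw [hM] at hmr
  have hnd2 : ∀ t, 0 < t → t < ℓ → ¬ ℓ ∣ (M + t) := by
    intro t ht1 ht2 hdvd
    obtain ⟨c, hc⟩ := hdvd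
    have hq1 : (M + t) % ℓ = t := by
      rw [← hM, Nat.add_comm, Nat.add_mul_mod_self_right, Nat.mod_eq_of_lt ht2]
    have hq2 : (M + t) % ℓ = 0 := by rw [hc, Nat.mul_mod_right]
    omega
  have down : ∀ i, i ≤ r → ∃ u ∈ A, u + (M + (r - i)) = x := by
    intro i
    induction i with
    | zero => intro _; exact ⟨z, hz, by omega⟩
    | succ n ihn =>
      intro hn
      have hprev := ihn (by omega)
      have hrg := hrangeP _ hprev
      have hiff := (hT (M + (r - n)) (by omega) (by omega)
        (hnd2 (r - n) (by omega) (by omega))).2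
      obtain ⟨u, hu, hue⟩ := hiff.mp hprev
      refine ⟨u, hu, ?_⟩
      clear ihn hiff hprev hrg
      omega
  have up : ∀ i, i ≤ ℓ - 1 - r → ∃ u ∈ A, u + (M + r + i) = x := by
    intro i
    induction i with
    | zero => intro _; exact ⟨z, hz, by omega⟩
    | succ n ihn =>
      intro hn
      have hprev := ihn (by omega)
      have hrg := hrangeP _ hprev
      have hiff := (hT (M + (r + (n + 1))) (by omega) (by omega)
        (hnd2 (r + (n + 1)) (by omega) (by omega))).2
      have hprev' : ∃ u ∈ A, u + (M + (r + (n + 1)) - 1) = x := by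
        obtain ⟨u', hu', hu'e⟩ := hprev
        refine ⟨u', hu', ?_⟩
        omega
      obtain ⟨u, hu, hue⟩ := hiff.mpr hprev'
      refine ⟨u, hu, ?_⟩
      clear ihn hiff hprev hprev' hrg
      omega
  obtain ⟨c, hc, hce⟩ := up (ℓ - 1 - r) le_rfl
  refine ⟨c, by omega, by omega, ?_, ?_, ?_⟩
  · intro j hj
    rcases le_or_gt (r + j) (ℓ - 1) with hcase | hcase
    · obtain ⟨u, hu, hue⟩ := up (ℓ - 1 - r - j) (by omega)
      have hcu : c + j = u := by omega
      rwa [hcu]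
    · obtain ⟨u, hu, hue⟩ := down (r + j - (ℓ - 1)) (by omega)
      have hcu : c + j = u := by omega
      rwa [hcu]
  · intro hmem
    exact hF2 (c + ℓ) hmem c hc rfl
  · intro w hw hwe
    have hcw : w + 1 = c := by omega
    obtain ⟨u, hu, hue⟩ := down r le_rfl
    have hwu : w + ℓ = u := by omega
    exact hF2 u hu w hw hwu
end

section
/- Let (A, B) be an α-valuation of the complete bipartite graph K_{a,b} with ab > 1, let x = max A, and let ℓ ≥ 2 be an integer such that: x+1 ∈ B and x+ℓ+1 ∈ B; x+j ∉ B for 2 ≤ j ≤ ℓ; x−j ∈ A for 1 ≤ j ≤ ℓ−1; and x−ℓ ∉ A. Then for any two consecutive runs of A, if s is the smallest element of one run and s + d is the smallest element of the next run (the least run minimum exceeding s), then ℓ divides d. -/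
/-- `s` is the minimum of a run of `A`: `s ∈ A` and the predecessor `s - 1` (as an integer)
is not in `A`. -/
def IsRunMin (A : Finset ℕ) (s : ℕ) : Prop :=
  s ∈ A ∧ ∀ w ∈ A, (w : ℤ) ≠ (s : ℤ) - 1

lemma key_tiling (ℓ N : ℕ) (hℓ : 2 ≤ ℓ)
    (inO inS : ℕ → Prop)
    (hS0 : ∀ j, j ≤ ℓ - 1 → inS j)
    (hO1 : inO 1) (hOl : inO (ℓ + 1))
    (cover : ∀ k, 1 ≤ k → k ≤ N → ∃ o s, inO o ∧ inS s ∧ o + s = k)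
    (range : ∀ o s, inO o → inS s → 1 ≤ o + s ∧ o + s ≤ N)
    (hOpos : ∀ o, inO o → 1 ≤ o)
    (uniq : ∀ o s o' s', inO o → inS s → inO o' → inS s' → o + s = o' + s' →
      o = o' ∧ s = s') :
    ∀ n : ℕ, (inO n → (ℓ : ℤ) ∣ ((n : ℤ) - 1)) ∧
      (inS n → ¬ (ℓ : ℤ) ∣ (n : ℤ) → inS (n - 1)) ∧
      (inS n → ¬ (ℓ : ℤ) ∣ ((n : ℤ) + 1) → inS (n + 1)) := by
  intro n
  induction n using Nat.strong_induction_on with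
  | _ n IH =>
    have hA : inO n → (ℓ : ℤ) ∣ ((n : ℤ) - 1) := by
      intro hOn
      by_contra hnd
      have hnpos : 1 ≤ n := hOpos n hOn
      have hn2 : 2 ≤ n := by
        rcases Nat.lt_or_ge n 2 with h | h
        · have hn1 : n = 1 := by omega
          exact absurd (show (ℓ : ℤ) ∣ ((n : ℤ) - 1) by rw [hn1]; push_cast; simp) hnd
        · exact h
      have hle : n + 0 ≤ N := (range n 0 hOn (hS0 0 (by omega))).2
      obtain ⟨o', s', hO', hS', hsum⟩ := cover (n - 1) (by omega) (by omega)
      have ho'pos : 1 ≤ o' := hOpos o' hO'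
      have hdo : (ℓ : ℤ) ∣ ((o' : ℤ) - 1) := (IH o' (by omega)).1 hO'
      have hnds : ¬ (ℓ : ℤ) ∣ ((s' : ℤ) + 1) := by
        intro hd
        apply hnd
        have heq : ((n : ℤ) - 1) = ((o' : ℤ) - 1) + ((s' : ℤ) + 1) := by omega
        rw [heq]; exact dvd_add hdo hd
      have hS1 : inS (s' + 1) := (IH s' (by omega)).2.2 hS' hnds
      have := uniq n 0 o' (s' + 1) hOn (hS0 0 (by omega)) hO' hS1 (by omega)
      omega
    have hB : inS n → ¬ (ℓ : ℤ) ∣ (n : ℤ) → inS (n - 1) := by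
      intro hSn hnd
      have hn1 : 1 ≤ n := by
        rcases Nat.eq_zero_or_pos n with rfl | h
        · exact absurd (show (ℓ : ℤ) ∣ (((0 : ℕ) : ℤ)) by simp) hnd
        · exact h
      by_contra hnot
      have hle : 1 + n ≤ N := (range 1 n hO1 hSn).2
      obtain ⟨o, s, hOo, hSs, hsum⟩ := cover n hn1 (by omega)
      have hopos : 1 ≤ o := hOpos o hOo
      have ho1 : o ≠ 1 := by
        rintro rfl
        have : s = n - 1 := by omega
        exact hnot (this ▸ hSs)
      by_cases hon : o = n
      · have := uniq o 1 1 n hOo (hS0 1 (by omega)) hO1 hSn (by omega)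
        omega
      · have holt : o < n := by omega
        have hdo : (ℓ : ℤ) ∣ ((o : ℤ) - 1) := (IH o holt).1 hOo
        have hnds : ¬ (ℓ : ℤ) ∣ ((s : ℤ) + 1) := by
          intro hd
          apply hnd
          have heq : (n : ℤ) = ((o : ℤ) - 1) + ((s : ℤ) + 1) := by omega
          rw [heq]; exact dvd_add hdo hd
        have hS1 : inS (s + 1) := (IH s (by omega)).2.2 hSs hnds
        have := uniq o (s + 1) 1 n hOo hS1 hO1 hSn (by omega)
        omega
    have hC : inS n → ¬ (ℓ : ℤ) ∣ ((n : ℤ) + 1) → inS (n + 1) := by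
      intro hSn hnd
      by_cases hsmall : n + 1 ≤ ℓ - 1
      · exact hS0 (n + 1) hsmall
      by_contra hnot
      have hge : ℓ - 1 ≤ n := by omega
      have hne : n ≠ ℓ - 1 := by
        rintro rfl
        apply hnd
        have heq : ((ℓ - 1 : ℕ) : ℤ) + 1 = (ℓ : ℤ) := by omega
        rw [heq]
      have hn1 : 1 ≤ n := by omega
      have hle : (ℓ + 1) + n ≤ N := (range (ℓ + 1) n hOl hSn).2
      obtain ⟨o, s, hOo, hSs, hsum⟩ := cover (n + 2) (by omega) (by omega)
      have hopos : 1 ≤ o := hOpos o hOo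
      have ho1 : o ≠ 1 := by
        rintro rfl
        have : s = n + 1 := by omega
        exact hnot (this ▸ hSs)
      by_cases hon1 : o = n + 1
      · have := uniq o 0 1 n hOo (hS0 0 (by omega)) hO1 hSn (by omega)
        omega
      by_cases hon2 : o = n + 2
      · have := uniq (ℓ + 1) n o (ℓ - 1) hOl hSn hOo (hS0 (ℓ - 1) (le_refl _)) (by omega)
        omega
      · have hole : o ≤ n := by omega
        have hdo : (ℓ : ℤ) ∣ ((o : ℤ) - 1) := by
          rcases eq_or_lt_of_le hole with heq | hlt
          · subst heq; exact hA hOo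
          · exact (IH o hlt).1 hOo
        have hoL : ℓ + 1 ≤ o := by
          have h1 : (ℓ : ℤ) ≤ (o : ℤ) - 1 := Int.le_of_dvd (by omega) hdo
          omega
        have hnds : ¬ (ℓ : ℤ) ∣ (s : ℤ) := by
          intro hd
          apply hnd
          have heq : (n : ℤ) + 1 = ((o : ℤ) - 1) + (s : ℤ) := by omega
          rw [heq]; exact dvd_add hdo hd
        have hSm : inS (s - 1) := (IH s (by omega)).2.1 hSs hnds
        have hs1 : 1 ≤ s := by
          rcases Nat.eq_zero_or_pos s with rfl | h
          · exact absurd (show (ℓ : ℤ) ∣ (((0 : ℕ) : ℤ)) by simp) hnds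
          · exact h
        have := uniq o (s - 1) 1 n hOo hSm hO1 hSn (by omega)
        omega
    exact ⟨hA, hB, hC⟩

theorem stmt_5 (a b ℓ : ℕ) (A B : Finset ℕ) (h : IsAlphaValuation a b A B)
    (hab : 1 < a * b) (x : ℕ) (hxA : x ∈ A) (hxmax : ∀ z ∈ A, z ≤ x)
    (hℓ : 2 ≤ ℓ)
    (h1 : x + 1 ∈ B) (h2 : x + ℓ + 1 ∈ B)
    (h3 : ∀ j : ℕ, 2 ≤ j → j ≤ ℓ → x + j ∉ B)
    (h4 : ∀ j : ℕ, 1 ≤ j → j ≤ ℓ - 1 → ∃ z ∈ A, (z : ℤ) = (x : ℤ) - (j : ℤ))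
    (h5 : ¬ ∃ z ∈ A, (z : ℤ) = (x : ℤ) - (ℓ : ℤ)) :
    ∀ s d : ℕ, 0 < d → IsRunMin A s → IsRunMin A (s + d) →
      (∀ t : ℕ, s < t → t < s + d → ¬ IsRunMin A t) →
      ℓ ∣ d := by
  obtain ⟨ha, hb, hcA, hcB, hlt, hinj, himg⟩ := h
  have hxlt : ∀ y ∈ B, x < y := fun y hy => hlt x hxA y hy
  -- the structural hypotheses for key_tiling
  have hS0 : ∀ j, j ≤ ℓ - 1 → ∃ z ∈ A, z + j = x := by
    intro j hj
    rcases Nat.eq_zero_or_pos j with rfl | hjpos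
    · exact ⟨x, hxA, by omega⟩
    · obtain ⟨z, hz, hze⟩ := h4 j hjpos hj
      exact ⟨z, hz, by omega⟩
  have hO1 : x + 1 ∈ B ∧ 1 ≤ 1 := ⟨h1, le_refl 1⟩
  have hOl : x + (ℓ + 1) ∈ B ∧ 1 ≤ ℓ + 1 := ⟨by rw [← add_assoc]; exact h2, by omega⟩
  have range : ∀ o s : ℕ, (x + o ∈ B ∧ 1 ≤ o) → (∃ z ∈ A, z + s = x) →
      1 ≤ o + s ∧ o + s ≤ a * b := by
    rintro o s ⟨hyB, ho⟩ ⟨z, hz, hzs⟩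
    have hzx : z ≤ x := hxmax z hz
    have hmem : ((x + o, z) : ℕ × ℕ) ∈ B ×ˢ A := Finset.mem_product.mpr ⟨hyB, hz⟩
    have himem : (x + o) - z ∈ Finset.Icc 1 (a * b) := by
      rw [← himg]
      exact Finset.mem_image_of_mem _ hmem
    rw [Finset.mem_Icc] at himem
    omega
  have cover : ∀ k, 1 ≤ k → k ≤ a * b →
      ∃ o s, (x + o ∈ B ∧ 1 ≤ o) ∧ (∃ z ∈ A, z + s = x) ∧ o + s = k := by
    intro k hk1 hk2
    have hk : k ∈ (B ×ˢ A).image (fun p : ℕ × ℕ => p.1 - p.2) := by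
      rw [himg]; exact Finset.mem_Icc.mpr ⟨hk1, hk2⟩
    obtain ⟨p, hp, hpk⟩ := Finset.mem_image.mp hk
    obtain ⟨hp1, hp2⟩ := Finset.mem_product.mp hp
    have h2x : p.2 ≤ x := hxmax _ hp2
    have h1x : x < p.1 := hxlt _ hp1
    have hpk' : p.1 - p.2 = k := hpk
    refine ⟨p.1 - x, x - p.2, ⟨?_, by omega⟩, ⟨p.2, hp2, by omega⟩, by omega⟩
    have hxx : x + (p.1 - x) = p.1 := by omega
    rw [hxx]; exact hp1
  have uniq : ∀ o s o' s' : ℕ, (x + o ∈ B ∧ 1 ≤ o) → (∃ z ∈ A, z + s = x) →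
      (x + o' ∈ B ∧ 1 ≤ o') → (∃ z ∈ A, z + s' = x) → o + s = o' + s' →
      o = o' ∧ s = s' := by
    rintro o s o' s' ⟨hyB, ho⟩ ⟨z, hz, hzs⟩ ⟨hyB', ho'⟩ ⟨z', hz', hzs'⟩ hsum
    have hzx : z ≤ x := hxmax z hz
    have hzx' : z' ≤ x := hxmax z' hz'
    have hm1 : ((x + o, z) : ℕ × ℕ) ∈ (↑(B ×ˢ A) : Set (ℕ × ℕ)) :=
      Finset.mem_coe.mpr (Finset.mem_product.mpr ⟨hyB, hz⟩)
    have hm2 : ((x + o', z') : ℕ × ℕ) ∈ (↑(B ×ˢ A) : Set (ℕ × ℕ)) :=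
      Finset.mem_coe.mpr (Finset.mem_product.mpr ⟨hyB', hz'⟩)
    have hfe : (fun p : ℕ × ℕ => p.1 - p.2) (x + o, z)
        = (fun p : ℕ × ℕ => p.1 - p.2) (x + o', z') := by
      simp only
      omega
    have := hinj hm1 hm2 hfe
    have h1 := congrArg Prod.fst this
    have h2 := congrArg Prod.snd this
    simp only at h1 h2
    omega
  have key := key_tiling ℓ (a * b) hℓ
    (fun o => x + o ∈ B ∧ 1 ≤ o) (fun s => ∃ z ∈ A, z + s = x)
    hS0 hO1 hOl cover range (fun o ho => ho.2) uniq
  intro s d hd hm1 hm2 _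
  obtain ⟨hs1, hs2⟩ := hm1
  obtain ⟨hsd1, hsd2⟩ := hm2
  have hsx : s ≤ x := hxmax s hs1
  have hsdx : s + d ≤ x := hxmax _ hsd1
  have key1 : (ℓ : ℤ) ∣ ((x - s : ℕ) : ℤ) + 1 := by
    by_contra hnd
    obtain ⟨z, hz, hze⟩ := (key (x - s)).2.2 ⟨s, hs1, by omega⟩ hnd
    exact hs2 z hz (by omega)
  have key2 : (ℓ : ℤ) ∣ ((x - (s + d) : ℕ) : ℤ) + 1 := by
    by_contra hnd
    obtain ⟨z, hz, hze⟩ := (key (x - (s + d))).2.2 ⟨s + d, hsd1, by omega⟩ hnd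
    exact hsd2 z hz (by omega)
  have hdvd : (ℓ : ℤ) ∣ (d : ℤ) := by
    have hsub := dvd_sub key1 key2
    have heq : (((x - s : ℕ) : ℤ) + 1) - (((x - (s + d) : ℕ) : ℤ) + 1) = (d : ℤ) := by omega
    rwa [heq] at hsub
  exact_mod_cast hdvd
end

section
/- Let (A, B) be an α-valuation of the complete bipartite graph K_{a,b} with ab > 1, and let ℓ ≥ 2 be an integer such that A is a union of blocks of the form {c, c+1, …, c+ℓ−1} with ℓ dividing c (that is, for every z ∈ A, all of ℓ⌊z/ℓ⌋, ℓ⌊z/ℓ⌋+1, …, ℓ⌊z/ℓ⌋+ℓ−1 belong to A). Then ℓ divides every element of B. -/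
lemma alpha_key (a b ℓ : ℕ) (A B : Finset ℕ) (h : IsAlphaValuation a b A B)
    (hℓ : 2 ≤ ℓ)
    (hA : ∀ z ∈ A, ∀ j : ℕ, j < ℓ → ℓ * (z / ℓ) + j ∈ A) :
    ∀ d : ℕ, ∀ y ∈ B, ∀ z ∈ A, y - z = d → ℓ ∣ (d + z % ℓ) := by
  obtain ⟨ha, hb, hcA, hcB, hlt, hinj, himg⟩ := h
  have hℓ0 : 0 < ℓ := by omega
  intro d
  induction d using Nat.strong_induction_on with
  | _ d ih =>
    intro y hy z hz hd
    have hzy : z < y := hlt z hz y hy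
    have hd1 : 1 ≤ d := by omega
    have hrℓ : z % ℓ < ℓ := Nat.mod_lt _ hℓ0
    have hzdecomp : ℓ * (z / ℓ) + z % ℓ = z := Nat.div_add_mod z ℓ
    by_cases hcase : z % ℓ < ℓ - 1
    · -- z+1 is in A
      have hz1 : z + 1 ∈ A := by
        have := hA z hz (z % ℓ + 1) (by omega)
        rwa [show ℓ * (z / ℓ) + (z % ℓ + 1) = z + 1 by omega] at this
      have hz1y : z + 1 < y := hlt _ hz1 y hy
      have hd' : y - (z + 1) = d - 1 := by omega
      have hih := ih (d - 1) (by omega) y hy (z + 1) hz1 hd'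
      have hmod : (z + 1) % ℓ = z % ℓ + 1 := by
        rw [show z + 1 = ℓ * (z / ℓ) + (z % ℓ + 1) by omega, Nat.mul_add_mod]
        exact Nat.mod_eq_of_lt (by omega)
      rw [hmod] at hih
      obtain ⟨k, hk⟩ := hih
      exact ⟨k, by omega⟩
    · -- z % ℓ = ℓ - 1, top of block
      have hrtop : z % ℓ = ℓ - 1 := by omega
      rcases Nat.eq_or_lt_of_le hd1 with h1 | h1
      · exact ⟨1, by omega⟩
      · -- d > 1 : find pair for d - 1
        have hdin : d ∈ Finset.Icc 1 (a * b) := by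
          rw [← himg]
          exact Finset.mem_image.mpr ⟨(y, z), Finset.mem_product.mpr ⟨hy, hz⟩, hd⟩
        have hdm1 : d - 1 ∈ (B ×ˢ A).image (fun p : ℕ × ℕ => p.1 - p.2) := by
          rw [himg]
          simp only [Finset.mem_Icc] at hdin ⊢
          omega
        obtain ⟨⟨y', z'⟩, hp, hpd⟩ := Finset.mem_image.mp hdm1
        obtain ⟨hy', hz'⟩ := Finset.mem_product.mp hp
        simp only at hpd hy' hz'
        have hz'y' : z' < y' := hlt z' hz' y' hy'
        have hr'ℓ : z' % ℓ < ℓ := Nat.mod_lt _ hℓ0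
        have hz'decomp : ℓ * (z' / ℓ) + z' % ℓ = z' := Nat.div_add_mod z' ℓ
        have ihd := ih (d - 1) (by omega) y' hy' z' hz' hpd
        by_cases hr'0 : z' % ℓ = 0
        · rw [hr'0, Nat.add_zero] at ihd
          obtain ⟨k, hk⟩ := ihd
          exact ⟨k + 1, by rw [Nat.mul_add]; omega⟩
        · -- z' % ℓ > 0 : z' - 1 ∈ A gives contradiction
          exfalso
          have hz'1 : z' - 1 ∈ A := by
            have := hA z' hz' (z' % ℓ - 1) (by omega)
            rwa [show ℓ * (z' / ℓ) + (z' % ℓ - 1) = z' - 1 by omega] at this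
          have hdiff : y' - (z' - 1) = d := by omega
          have heqp : ((y, z) : ℕ × ℕ) = (y', z' - 1) :=
            hinj (by simp [Finset.mem_product, hy, hz])
              (by simp [Finset.mem_product, hy', hz'1])
              (by simp only; rw [hd, hdiff])
          have hzz : z = z' - 1 := congrArg Prod.snd heqp
          have hmod : (z' - 1) % ℓ = z' % ℓ - 1 := by
            rw [show z' - 1 = ℓ * (z' / ℓ) + (z' % ℓ - 1) by omega, Nat.mul_add_mod]
            exact Nat.mod_eq_of_lt (by omega)
          rw [hzz, hmod] at hrtop
          omega

theorem stmt_7 (a b ℓ : ℕ) (A B : Finset ℕ) (h : IsAlphaValuation a b A B)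
    (hab : 1 < a * b) (hℓ : 2 ≤ ℓ)
    (hA : ∀ z ∈ A, ∀ j : ℕ, j < ℓ → ℓ * (z / ℓ) + j ∈ A) :
    ∀ y ∈ B, ℓ ∣ y := by
  intro y hy
  obtain ⟨z, hz⟩ : A.Nonempty := Finset.card_pos.mp (h.2.2.1 ▸ h.1)
  have hzy : z < y := h.2.2.2.2.1 z hz y hy
  obtain ⟨k, hk⟩ := alpha_key a b ℓ A B h hℓ hA (y - z) y hy z hz rfl
  have hzd : ℓ * (z / ℓ) + z % ℓ = z := Nat.div_add_mod z ℓ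
  exact ⟨k + z / ℓ, by rw [Nat.mul_add]; omega⟩
end

section
/- (Projection I.) Let ℓ ≥ 2 and let (A, B) be a type I α-valuation of the complete bipartite graph K_{a,b} with parameter ℓ. Define W = {z/ℓ : z ∈ A and ℓ divides z} and X = {y/ℓ : y ∈ B}. Then ℓ divides a and (W, X) is an α-valuation of K_{a/ℓ, b}. -/
theorem stmt_10 (a b ℓ : ℕ) (hℓ : 2 ≤ ℓ) (A B : Finset ℕ)
    (h : IsAlphaValuation a b A B)
    (hB : ∀ y ∈ B, ℓ ∣ y)
    (hA : ∀ z ∈ A, ∀ j : ℕ, j < ℓ → ℓ * (z / ℓ) + j ∈ A) :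
    ℓ ∣ a ∧
    IsAlphaValuation (a / ℓ) b
      ((A.filter (fun z => ℓ ∣ z)).image (fun z => z / ℓ))
      (B.image (fun y => y / ℓ)) := by
  obtain ⟨ha, hb, hcardA, hcardB, hlt, hinj, himg⟩ := h
  have hℓ0 : 0 < ℓ := by omega
  set Af := A.filter (fun z => ℓ ∣ z) with hAfdef
  set W := Af.image (fun z => z / ℓ) with hWdef
  set X := B.image (fun y => y / ℓ) with hXdef
  have hmulsub : ∀ k n m : ℕ, k * (n - m) = k * n - k * m := Nat.mul_sub
  -- image of all of A equals W
  have himgA : A.image (fun z => z / ℓ) = W := by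
    apply Finset.Subset.antisymm
    · intro w hw
      simp only [Finset.mem_image] at hw
      obtain ⟨z, hz, rfl⟩ := hw
      have h0 : ℓ * (z / ℓ) + 0 ∈ A := hA z hz 0 hℓ0
      simp only [add_zero] at h0
      refine Finset.mem_image.mpr ⟨ℓ * (z / ℓ), Finset.mem_filter.mpr ⟨h0, Dvd.intro _ rfl⟩, ?_⟩
      exact Nat.mul_div_cancel_left _ hℓ0
    · exact Finset.image_subset_image (Finset.filter_subset _ _)
  have hWA : ∀ w ∈ W, ℓ * w ∈ A := by
    intro w hw
    obtain ⟨z, hz, rfl⟩ := Finset.mem_image.mp hw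
    obtain ⟨hzA, hzd⟩ := Finset.mem_filter.mp hz
    rwa [Nat.mul_div_cancel' hzd]
  have hXB : ∀ x ∈ X, ℓ * x ∈ B := by
    intro x hx
    obtain ⟨y, hy, rfl⟩ := Finset.mem_image.mp hx
    rwa [Nat.mul_div_cancel' (hB y hy)]
  -- fibers of A under division by ℓ
  have hfiber : ∀ w ∈ W, A.filter (fun z => z / ℓ = w) = Finset.Ico (ℓ * w) (ℓ * w + ℓ) := by
    intro w hw
    have hwA := hWA w hw
    ext z
    simp only [Finset.mem_filter, Finset.mem_Ico]
    constructor
    · rintro ⟨hzA, rfl⟩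
      constructor
      · calc ℓ * (z / ℓ) ≤ z / ℓ * ℓ := by ring_nf; exact le_refl _
          _ ≤ z := Nat.div_mul_le_self z ℓ
      · have h1 := Nat.div_add_mod z ℓ
        have h2 := Nat.mod_lt z hℓ0
        omega
    · rintro ⟨h1, h2⟩
      have hj : z - ℓ * w < ℓ := by omega
      have := hA (ℓ * w) hwA (z - ℓ * w) hj
      rw [Nat.mul_div_cancel_left _ hℓ0] at this
      have hz : ℓ * w + (z - ℓ * w) = z := by omega
      rw [hz] at this
      refine ⟨this, ?_⟩
      have : z = ℓ * w + (z - ℓ * w) := by omega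
      rw [this, Nat.mul_add_div hℓ0, Nat.div_eq_of_lt hj, add_zero]
  -- cardinality
  have hcount : a = W.card * ℓ := by
    have h1 : A.card = ∑ w ∈ W, (A.filter (fun z => z / ℓ = w)).card := by
      apply Finset.card_eq_sum_card_fiberwise
      intro z hz
      rw [← himgA]
      exact Finset.mem_image_of_mem _ hz
    rw [← hcardA, h1,
      Finset.sum_congr rfl (fun w hw => by
        rw [hfiber w hw, Nat.card_Ico, Nat.add_sub_cancel_left]),
      Finset.sum_const, smul_eq_mul]
  have hdvd : ℓ ∣ a := ⟨W.card, by rw [hcount, mul_comm]⟩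
  have hWcard : W.card = a / ℓ := by
    rw [hcount, Nat.mul_div_cancel _ hℓ0]
  have hab : ℓ * (a / ℓ * b) = a * b := by
    rw [← mul_assoc, Nat.mul_div_cancel' hdvd]
  refine ⟨hdvd, ?_, hb, hWcard, ?_, ?_, ?_, ?_⟩
  · exact Nat.div_pos (Nat.le_of_dvd ha hdvd) hℓ0
  · rw [← hcardB]
    apply Finset.card_image_of_injOn
    intro y1 h1 y2 h2 hh
    have hh' : y1 / ℓ = y2 / ℓ := hh
    rw [← Nat.div_mul_cancel (hB y1 h1), ← Nat.div_mul_cancel (hB y2 h2), hh']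
  · intro w hw x hx
    have := hlt (ℓ * w) (hWA w hw) (ℓ * x) (hXB x hx)
    exact Nat.lt_of_mul_lt_mul_left this
  · rintro ⟨x1, w1⟩ hp ⟨x2, w2⟩ hq heq
    simp only [Finset.coe_product, Set.mem_prod, Finset.mem_coe] at hp hq
    simp only at heq
    have key : (fun p : ℕ × ℕ => p.1 - p.2) (ℓ * x1, ℓ * w1) = (fun p : ℕ × ℕ => p.1 - p.2) (ℓ * x2, ℓ * w2) := by
      simp only [← hmulsub, heq]
    have := hinj (by
      simp only [Finset.coe_product, Set.mem_prod, Finset.mem_coe]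
      exact ⟨hXB x1 hp.1, hWA w1 hp.2⟩) (by
      simp only [Finset.coe_product, Set.mem_prod, Finset.mem_coe]
      exact ⟨hXB x2 hq.1, hWA w2 hq.2⟩) key
    have h1 : ℓ * x1 = ℓ * x2 := congrArg Prod.fst this
    have h2 : ℓ * w1 = ℓ * w2 := congrArg Prod.snd this
    exact Prod.ext (Nat.eq_of_mul_eq_mul_left hℓ0 h1) (Nat.eq_of_mul_eq_mul_left hℓ0 h2)
  · ext d
    simp only [Finset.mem_image, Finset.mem_product, Finset.mem_Icc]
    constructor
    · rintro ⟨⟨x, w⟩, ⟨hx, hw⟩, rfl⟩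
      simp only
      have hyB := hXB x hx
      have hzA := hWA w hw
      have hmem : (ℓ * x, ℓ * w) ∈ B ×ˢ A := Finset.mem_product.mpr ⟨hyB, hzA⟩
      have : ℓ * x - ℓ * w ∈ Finset.Icc 1 (a * b) := by
        rw [← himg]
        exact Finset.mem_image_of_mem _ hmem
      rw [← hmulsub, Finset.mem_Icc] at this
      constructor
      · by_contra hc
        have hxw : x - w = 0 := by omega
        have h0 : ℓ * (x - w) = 0 := by rw [hxw, mul_zero]
        omega
      · have hle : ℓ * (x - w) ≤ ℓ * (a / ℓ * b) := by rw [hab]; omega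
        exact Nat.le_of_mul_le_mul_left hle hℓ0
    · rintro ⟨hd1, hd2⟩
      have hld : ℓ * d ∈ Finset.Icc 1 (a * b) := by
        rw [Finset.mem_Icc]
        constructor
        · exact Nat.one_le_iff_ne_zero.mpr (by positivity)
        · calc ℓ * d ≤ ℓ * (a / ℓ * b) := Nat.mul_le_mul_left _ hd2
            _ = a * b := hab
      rw [← himg] at hld
      obtain ⟨⟨y, z⟩, hmem, heq⟩ := Finset.mem_image.mp hld
      obtain ⟨hyB, hzA⟩ := Finset.mem_product.mp hmem
      simp only at heq
      have hzy : z < y := hlt z hzA y hyB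
      have hy : y = z + ℓ * d := by omega
      have hdy := hB y hyB
      have hdz : ℓ ∣ z := by
        have h2 := Nat.dvd_sub hdy (Dvd.intro d rfl)
        have h3 : y - ℓ * d = z := by omega
        rwa [h3] at h2
      refine ⟨(y / ℓ, z / ℓ), ⟨Finset.mem_image_of_mem _ hyB,
        Finset.mem_image_of_mem _ (Finset.mem_filter.mpr ⟨hzA, hdz⟩)⟩, ?_⟩
      simp only
      rw [hy, Nat.add_mul_div_left _ _ hℓ0]
      omega
end

section
/- (Projection II.) Let ℓ ≥ 2 and let (A, B) be a type II α-valuation of the complete bipartite graph K_{a,b} with parameter ℓ. Define W = {z/ℓ : z ∈ A} and X = {y/ℓ : y ∈ B and ℓ divides y}. Then ℓ divides b and (W, X) is an α-valuation of K_{a, b/ℓ}. -/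
private lemma ceil_div_self {ℓ e : ℕ} (hℓ : 0 < ℓ) (hd : ℓ ∣ e) :
    ℓ * ((e + ℓ - 1) / ℓ) = e := by
  obtain ⟨m, rfl⟩ := hd
  rw [Nat.add_sub_assoc (by omega : 1 ≤ ℓ), Nat.mul_add_div hℓ,
    Nat.div_eq_of_lt (by omega), Nat.add_zero]

private lemma block_top {ℓ e x : ℕ} (hℓ : 0 < ℓ) (hd : ℓ ∣ e)
    (h1 : e - (ℓ - 1) ≤ x) (h2 : x ≤ e) :
    ℓ * ((x + ℓ - 1) / ℓ) = e := by
  obtain ⟨m, rfl⟩ := hd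
  have hkey : (x + ℓ - 1) / ℓ = m := by
    apply Nat.div_eq_of_lt_le
    · rw [mul_comm]
      set p := ℓ * m with hp
      omega
    · rw [add_mul, one_mul, mul_comm]
      set p := ℓ * m with hp
      omega
  rw [hkey]

theorem stmt_11 (a b ℓ : ℕ) (hℓ : 2 ≤ ℓ) (A B : Finset ℕ)
    (h : IsAlphaValuation a b A B)
    (hA : ∀ z ∈ A, ℓ ∣ z)
    (hB : ∀ y ∈ B, ∀ j : ℕ, j < ℓ → ℓ * ((y + ℓ - 1) / ℓ) - j ∈ B) :
    ℓ ∣ b ∧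
    IsAlphaValuation a (b / ℓ)
      (A.image (fun z => z / ℓ))
      ((B.filter (fun y => ℓ ∣ y)).image (fun y => y / ℓ)) := by
  obtain ⟨ha, hb, hcardA, hcardB, hlt, hinj, himg⟩ := h
  have hℓ0 : 0 < ℓ := by omega
  set B' := B.filter (fun y => ℓ ∣ y) with hB'def
  have hApos : A.Nonempty := Finset.card_pos.mp (hcardA ▸ ha)
  have hyge1 : ∀ y ∈ B, 1 ≤ y := by
    intro y hy
    obtain ⟨z, hz⟩ := hApos
    have := hlt z hz y hy
    omega
  have hmemB' : ∀ e ∈ B', ℓ ≤ e ∧ ℓ ∣ e ∧ e ∈ B := by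
    intro e he
    rw [hB'def, Finset.mem_filter] at he
    obtain ⟨heB, hed⟩ := he
    have h1 := hyge1 e heB
    exact ⟨Nat.le_of_dvd (by omega) hed, hed, heB⟩
  -- every element of a block of an element of B' is in B
  have hkey : ∀ e ∈ B', ∀ y, e - (ℓ - 1) ≤ y → y ≤ e → y ∈ B := by
    intro e he y h1 h2
    obtain ⟨hle, hed, heB⟩ := hmemB' e he
    have hj : e - y < ℓ := by omega
    have := hB e heB (e - y) hj
    rwa [ceil_div_self hℓ0 hed, (by omega : e - (e - y) = y)] at this
  -- every element of B is in the block of some element of B'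
  have hcover : ∀ y ∈ B, ∃ e ∈ B', e - (ℓ - 1) ≤ y ∧ y ≤ e := by
    intro y hy
    have h1 := hyge1 y hy
    refine ⟨ℓ * ((y + ℓ - 1) / ℓ), ?_, ?_, ?_⟩
    · rw [hB'def, Finset.mem_filter]
      have := hB y hy 0 (by omega)
      simp only [Nat.sub_zero] at this
      exact ⟨this, Dvd.intro _ rfl⟩
    all_goals
      have hdm := Nat.div_add_mod (y + ℓ - 1) ℓ
      have hr := Nat.mod_lt (y + ℓ - 1) hℓ0
      set t := ℓ * ((y + ℓ - 1) / ℓ) with ht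
      omega
  have hBeq : B = B'.biUnion (fun e => Finset.Icc (e - (ℓ - 1)) e) := by
    ext y
    simp only [Finset.mem_biUnion, Finset.mem_Icc]
    constructor
    · intro hy
      obtain ⟨e, he, h1, h2⟩ := hcover y hy
      exact ⟨e, he, h1, h2⟩
    · rintro ⟨e, he, h1, h2⟩
      exact hkey e he y h1 h2
  have hdisj : ∀ e ∈ B', ∀ e' ∈ B', e ≠ e' →
      Disjoint (Finset.Icc (e - (ℓ - 1)) e) (Finset.Icc (e' - (ℓ - 1)) e') := by
    intro e he e' he' hne
    rw [Finset.disjoint_left]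
    intro x hx hx'
    rw [Finset.mem_Icc] at hx hx'
    exact hne ((block_top hℓ0 (hmemB' e he).2.1 hx.1 hx.2).symm.trans
      (block_top hℓ0 (hmemB' e' he').2.1 hx'.1 hx'.2))
  have hbcard : b = B'.card * ℓ := by
    rw [← hcardB, hBeq, Finset.card_biUnion hdisj]
    rw [Finset.sum_congr rfl (fun e he => ?_)]
    · rw [Finset.sum_const, smul_eq_mul]
    · rw [Nat.card_Icc]
      have := (hmemB' e he).1
      omega
  have hdvdb : ℓ ∣ b := ⟨B'.card, by rw [hbcard, mul_comm]⟩
  have hbdiv : b / ℓ = B'.card := by rw [hbcard, Nat.mul_div_cancel _ hℓ0]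
  -- injectivity of division on A and B'
  have hinjA : Set.InjOn (fun z => z / ℓ) ↑A := by
    intro z hz z' hz' hzz
    have h1 := Nat.mul_div_cancel' (hA z hz)
    have h2 := Nat.mul_div_cancel' (hA z' hz')
    simp only at hzz
    rw [← h1, ← h2, hzz]
  have hinjB' : Set.InjOn (fun y => y / ℓ) ↑B' := by
    intro y hy y' hy' hyy
    have h1 := Nat.mul_div_cancel' (hmemB' y hy).2.1
    have h2 := Nat.mul_div_cancel' (hmemB' y' hy').2.1
    simp only at hyy
    rw [← h1, ← h2, hyy]
  -- membership helpers
  have hWmem : ∀ w ∈ A.image (fun z => z / ℓ), ℓ * w ∈ A ∧ ℓ ∣ ℓ * w := by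
    intro w hw
    rw [Finset.mem_image] at hw
    obtain ⟨z, hz, rfl⟩ := hw
    rw [Nat.mul_div_cancel' (hA z hz)]
    exact ⟨hz, hA z hz⟩
  have hXmem : ∀ x ∈ B'.image (fun y => y / ℓ), ℓ * x ∈ B := by
    intro x hx
    rw [Finset.mem_image] at hx
    obtain ⟨y, hy, rfl⟩ := hx
    rw [Nat.mul_div_cancel' (hmemB' y hy).2.1]
    exact (hmemB' y hy).2.2
  refine ⟨hdvdb, ha, ?_, ?_, ?_, ?_, ?_, ?_⟩
  · -- 0 < b / ℓ
    rw [hbdiv]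
    rw [hbcard] at hb
    rcases Nat.eq_zero_or_pos B'.card with h0 | h0
    · rw [h0, Nat.zero_mul] at hb; omega
    · exact h0
  · rw [Finset.card_image_of_injOn hinjA, hcardA]
  · rw [Finset.card_image_of_injOn hinjB', hbdiv]
  · -- order
    intro w hw x hx
    rw [Finset.mem_image] at hw hx
    obtain ⟨z, hz, rfl⟩ := hw
    obtain ⟨y, hy, rfl⟩ := hx
    exact Nat.div_lt_div_of_lt_of_dvd (hmemB' y hy).2.1
      (hlt z hz y (hmemB' y hy).2.2)
  · -- injectivity
    intro p hp q hq hpq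
    simp only [Finset.coe_product, Set.mem_prod, Finset.mem_coe] at hp hq
    have hp1 := hXmem p.1 hp.1
    have hp2 := hWmem p.2 hp.2
    have hq1 := hXmem q.1 hq.1
    have hq2 := hWmem q.2 hq.2
    simp only at hpq
    have key : (ℓ * p.1, ℓ * p.2) = (ℓ * q.1, ℓ * q.2) := by
      apply hinj
      · simp only [Finset.coe_product, Set.mem_prod, Finset.mem_coe]
        exact ⟨hp1, hp2.1⟩
      · simp only [Finset.coe_product, Set.mem_prod, Finset.mem_coe]
        exact ⟨hq1, hq2.1⟩
      · simp only [← Nat.mul_sub, hpq]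
    have h1 : p.1 = q.1 := Nat.eq_of_mul_eq_mul_left hℓ0 (congrArg Prod.fst key)
    have h2 : p.2 = q.2 := Nat.eq_of_mul_eq_mul_left hℓ0 (congrArg Prod.snd key)
    exact Prod.ext h1 h2
  · -- image equals Icc
    ext d
    constructor
    · intro hd
      rw [Finset.mem_image] at hd
      obtain ⟨⟨x, w⟩, hmem, rfl⟩ := hd
      rw [Finset.mem_product] at hmem
      obtain ⟨hx, hw⟩ := hmem
      rw [Finset.mem_Icc]
      simp only
      have hxB := hXmem x hx
      have hwA := (hWmem w hw).1
      have hmem : ℓ * x - ℓ * w ∈ Finset.Icc 1 (a * b) := by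
        rw [← himg, Finset.mem_image]
        exact ⟨(ℓ * x, ℓ * w), Finset.mem_product.mpr ⟨hxB, hwA⟩, rfl⟩
      rw [Finset.mem_Icc, ← Nat.mul_sub] at hmem
      constructor
      · rcases Nat.eq_zero_or_pos (x - w) with h0 | h0
        · rw [h0, Nat.mul_zero] at hmem; omega
        · omega
      · rw [hbdiv]
        have : ℓ * (x - w) ≤ ℓ * (a * B'.card) := by
          calc ℓ * (x - w) ≤ a * b := hmem.2
          _ = ℓ * (a * B'.card) := by rw [hbcard]; ring
        exact Nat.le_of_mul_le_mul_left this hℓ0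
    · intro hd
      rw [Finset.mem_Icc] at hd
      obtain ⟨hd1, hd2⟩ := hd
      have hmem : ℓ * d ∈ Finset.Icc 1 (a * b) := by
        rw [Finset.mem_Icc]
        constructor
        · exact Nat.one_le_iff_ne_zero.mpr (by positivity)
        · calc ℓ * d ≤ ℓ * (a * (b / ℓ)) := Nat.mul_le_mul_left ℓ hd2
          _ = a * b := by rw [hbdiv, hbcard]; ring
      rw [← himg, Finset.mem_image] at hmem
      obtain ⟨⟨y, z⟩, hyz, heq⟩ := hmem
      rw [Finset.mem_product] at hyz
      obtain ⟨hy, hz⟩ := hyz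
      simp only at heq
      have hzy := hlt z hz y hy
      obtain ⟨k, rfl⟩ := hA z hz
      have hyeq : y = ℓ * k + ℓ * d := by
        set t := ℓ * d with ht
        set s := ℓ * k with hs
        omega
      have hyB' : y ∈ B' := by
        rw [hB'def, Finset.mem_filter]
        exact ⟨hy, by rw [hyeq]; exact Dvd.dvd.add (Dvd.intro _ rfl) (Dvd.intro _ rfl)⟩
      rw [Finset.mem_image]
      refine ⟨(y / ℓ, ℓ * k / ℓ), Finset.mem_product.mpr ⟨Finset.mem_image_of_mem _ hyB',
        Finset.mem_image_of_mem _ hz⟩, ?_⟩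
      simp only
      rw [hyeq, ← Nat.mul_add, Nat.mul_div_cancel_left _ hℓ0,
        Nat.mul_div_cancel_left _ hℓ0]
      omega
end

section
/- (Blowup I.) Let (W, X) be an α-valuation of the complete bipartite graph K_{a,b} and let ℓ ≥ 2 be an integer. Define A = {ℓw + j : w ∈ W, 0 ≤ j ≤ ℓ−1} and B = {ℓx : x ∈ X}. Then (A, B) is an α-valuation of K_{ℓa, b}. -/
private lemma euclid_unique (ℓ w j w' j' : ℕ) (hj : j < ℓ) (hj' : j' < ℓ)
    (he : ℓ*w+j = ℓ*w'+j') : w = w' ∧ j = j' := by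
  rcases lt_trichotomy w w' with hc|hc|hc
  · have h2 : ℓ*(w+1) ≤ ℓ*w' := Nat.mul_le_mul_left ℓ hc
    rw [Nat.mul_add, Nat.mul_one] at h2; omega
  · subst hc; omega
  · have h2 : ℓ*(w'+1) ≤ ℓ*w := Nat.mul_le_mul_left ℓ hc
    rw [Nat.mul_add, Nat.mul_one] at h2; omega

private lemma key_unique (ℓ d j d' j' : ℕ) (hℓ : 2 ≤ ℓ)
    (hd : 1 ≤ d) (hd' : 1 ≤ d') (hj : j < ℓ) (hj' : j' < ℓ)
    (he : ℓ*d - j = ℓ*d' - j') : d = d' ∧ j = j' := by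
  have h1 : ℓ*1 ≤ ℓ*d := Nat.mul_le_mul_left ℓ hd
  have h1' : ℓ*1 ≤ ℓ*d' := Nat.mul_le_mul_left ℓ hd'
  rw [Nat.mul_one] at h1 h1'
  rcases lt_trichotomy d d' with hc|hc|hc
  · have h2 : ℓ*(d+1) ≤ ℓ*d' := Nat.mul_le_mul_left ℓ hc
    rw [Nat.mul_add, Nat.mul_one] at h2; omega
  · subst hc; omega
  · have h2 : ℓ*(d'+1) ≤ ℓ*d := Nat.mul_le_mul_left ℓ hc
    rw [Nat.mul_add, Nat.mul_one] at h2; omega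

theorem stmt_12 (a b ℓ : ℕ) (hℓ : 2 ≤ ℓ) (W X : Finset ℕ)
    (h : IsAlphaValuation a b W X) :
    IsAlphaValuation (ℓ * a) b
      ((W ×ˢ Finset.range ℓ).image (fun p => ℓ * p.1 + p.2))
      (X.image (fun x => ℓ * x)) := by
  obtain ⟨ha, hb, hWa, hXb, hlt, hinj, himg⟩ := h
  -- basic facts
  have hxw : ∀ x ∈ X, ∀ w ∈ W, 1 ≤ x - w ∧ x - w ≤ a * b := by
    intro x hx w hw
    have : x - w ∈ Finset.Icc 1 (a*b) := by
      rw [← himg]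
      exact Finset.mem_image.2 ⟨(x, w), Finset.mem_product.2 ⟨hx, hw⟩, rfl⟩
    simpa using this
  -- value computation
  have hval : ∀ x w j : ℕ, w < x → ℓ*x - (ℓ*w + j) = ℓ*(x-w) - j := by
    intro x w j hwx
    have h1 : ℓ*(x-w) + ℓ*w = ℓ*x := by
      rw [← Nat.mul_add, Nat.sub_add_cancel (le_of_lt hwx)]
    have h2 : ℓ*w ≤ ℓ*x := Nat.mul_le_mul_left ℓ (le_of_lt hwx)
    omega
  refine ⟨by positivity, hb, ?_, ?_, ?_, ?_, ?_⟩
  · -- card of A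
    rw [Finset.card_image_of_injOn, Finset.card_product, Finset.card_range, hWa, mul_comm]
    intro p hp q hq he
    simp only [Finset.coe_product, Set.mem_prod, Finset.mem_coe, Finset.mem_range] at hp hq
    have := euclid_unique ℓ p.1 p.2 q.1 q.2 hp.2 hq.2 he
    exact Prod.ext this.1 this.2
  · -- card of B
    rw [Finset.card_image_of_injective _ fun x y hxy => Nat.eq_of_mul_eq_mul_left (by omega) hxy, hXb]
  · -- all of A below all of B
    intro z hz y hy
    simp only [Finset.mem_image, Finset.mem_product, Finset.mem_range, Prod.exists] at hz hy
    obtain ⟨w, j, ⟨hw, hj⟩, rfl⟩ := hz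
    obtain ⟨x, hx, rfl⟩ := hy
    have hwx : w < x := hlt w hw x hx
    have : ℓ*(w+1) ≤ ℓ*x := Nat.mul_le_mul_left ℓ hwx
    rw [Nat.mul_add, Nat.mul_one] at this; omega
  · -- injectivity
    intro p hp q hq he
    obtain ⟨p1, p2⟩ := p
    obtain ⟨q1, q2⟩ := q
    simp only [Finset.coe_product, Set.mem_prod, Finset.mem_coe, Finset.mem_image,
      Finset.mem_product, Finset.mem_range, Prod.exists] at hp hq
    obtain ⟨⟨x, hx, hpx⟩, ⟨w, j, ⟨hw, hj⟩, hpz⟩⟩ := hp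
    obtain ⟨⟨x', hx', hqx⟩, ⟨w', j', ⟨hw', hj'⟩, hqz⟩⟩ := hq
    have hwx : w < x := hlt w hw x hx
    have hwx' : w' < x' := hlt w' hw' x' hx'
    subst hpx hpz hqx hqz
    simp only at he ⊢
    rw [hval x w j hwx, hval x' w' j' hwx'] at he
    obtain ⟨hd1, _⟩ := hxw x hx w hw
    obtain ⟨hd1', _⟩ := hxw x' hx' w' hw'
    obtain ⟨hdd, hjj⟩ := key_unique ℓ (x-w) j (x'-w') j' hℓ hd1 hd1' hj hj' he
    have hxx : (x, w) = (x', w') := by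
      apply hinj (Finset.mem_coe.2 (Finset.mem_product.2 ⟨hx, hw⟩))
        (Finset.mem_coe.2 (Finset.mem_product.2 ⟨hx', hw'⟩))
      simpa using hdd
    obtain ⟨h1, h2⟩ := Prod.mk.injEq .. ▸ hxx
    simp_all
  · -- image = Icc
    ext m
    simp only [Finset.mem_image, Finset.mem_product, Finset.mem_range, Finset.mem_Icc,
      Prod.exists]
    constructor
    · rintro ⟨y, z, ⟨⟨x, hx, rfl⟩, w, j, ⟨hw, hj⟩, rfl⟩, rfl⟩
      have hwx : w < x := hlt w hw x hx
      rw [hval x w j hwx]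
      obtain ⟨hd1, hd2⟩ := hxw x hx w hw
      have h1 : ℓ*1 ≤ ℓ*(x-w) := Nat.mul_le_mul_left ℓ hd1
      have h2 : ℓ*(x-w) ≤ ℓ*(a*b) := Nat.mul_le_mul_left ℓ hd2
      rw [Nat.mul_one] at h1
      rw [Nat.mul_assoc]
      omega
    · rintro ⟨hm1, hm2⟩
      rw [Nat.mul_assoc] at hm2
      obtain ⟨q, r, hrl, hdm⟩ : ∃ q r, r < ℓ ∧ ℓ*q + r = m - 1 :=
        ⟨(m-1)/ℓ, (m-1)%ℓ, Nat.mod_lt _ (by omega), Nat.div_add_mod _ _⟩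
      have hqab : q + 1 ≤ a*b := by
        by_contra hc
        push_neg at hc
        have : ℓ*(a*b) ≤ ℓ*q := Nat.mul_le_mul_left ℓ (by omega)
        omega
      -- find x, w with x - w = q + 1
      have hmem : q + 1 ∈ Finset.Icc 1 (a*b) := Finset.mem_Icc.2 ⟨by omega, hqab⟩
      rw [← himg] at hmem
      obtain ⟨⟨x, w⟩, hpmem, hdiff⟩ := Finset.mem_image.1 hmem
      obtain ⟨hx, hw⟩ := Finset.mem_product.1 hpmem
      simp only at hdiff
      have hwx : w < x := hlt w hw x hx
      refine ⟨ℓ*x, ℓ*w + (ℓ - 1 - r), ⟨⟨x, hx, rfl⟩, w, ℓ - 1 - r, ⟨hw, by omega⟩, rfl⟩, ?_⟩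
      rw [hval x w _ hwx, hdiff]
      have : ℓ*(q+1) = ℓ*q + ℓ := by ring
      omega
end

section
/- (Blowup II.) Let (W, X) be an α-valuation of the complete bipartite graph K_{a,b} and let ℓ ≥ 2 be an integer. Define A = {ℓw : w ∈ W} and B = {ℓx − j : x ∈ X, 0 ≤ j ≤ ℓ−1}. Then (A, B) is an α-valuation of K_{a, ℓb}. -/
lemma key_unique_s13 (ℓ x x' j j' : ℕ) (hx : 1 ≤ x) (hx' : 1 ≤ x') (hj : j < ℓ) (hj' : j' < ℓ)
    (heq : ℓ * x - j = ℓ * x' - j') : x = x' ∧ j = j' := by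
  have hℓ0 : 0 < ℓ := by omega
  have h1 : j ≤ ℓ * x := le_trans hj.le (Nat.le_mul_of_pos_right ℓ hx)
  have h2 : j' ≤ ℓ * x' := le_trans hj'.le (Nat.le_mul_of_pos_right ℓ hx')
  have heqz : (ℓ : ℤ) * x - j = ℓ * x' - j' := by
    have := congrArg (Nat.cast : ℕ → ℤ) heq
    push_cast [h1, h2] at this
    linarith
  have hdvd : (ℓ : ℤ) ∣ ((j' : ℤ) - j) := ⟨(x' : ℤ) - x, by rw [mul_sub]; linarith⟩
  have hj0 : (j' : ℤ) - j = 0 := by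
    refine Int.eq_zero_of_abs_lt_dvd hdvd ?_
    rw [abs_lt]
    constructor
    · have : (j : ℤ) < ℓ := by exact_mod_cast hj
      linarith [Int.natCast_nonneg j']
    · have : (j' : ℤ) < ℓ := by exact_mod_cast hj'
      linarith [Int.natCast_nonneg j]
  have hjj : j = j' := by omega
  subst hjj
  refine ⟨Nat.eq_of_mul_eq_mul_left hℓ0 ?_, rfl⟩
  omega

theorem stmt_13 (a b ℓ : ℕ) (hℓ : 2 ≤ ℓ) (W X : Finset ℕ)
    (h : IsAlphaValuation a b W X) :
    IsAlphaValuation a (ℓ * b)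
      (W.image (fun w => ℓ * w))
      ((X ×ˢ Finset.range ℓ).image (fun p => ℓ * p.1 - p.2)) := by
  obtain ⟨ha, hb, hcW, hcX, hlt, hinj, himg⟩ := h
  have hℓ0 : 0 < ℓ := by omega
  obtain ⟨w0, hw0⟩ : W.Nonempty := Finset.card_pos.mp (hcW ▸ ha)
  have hX1 : ∀ x ∈ X, 1 ≤ x := by
    intro x hx
    have := hlt w0 hw0 x hx
    omega
  have hmul : ∀ w x : ℕ, w < x → ℓ * x = ℓ * w + ℓ * (x - w) := by
    intro w x hwx
    rw [← Nat.mul_add]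
    congr 1
    omega
  refine ⟨ha, Nat.mul_pos hℓ0 hb, ?_, ?_, ?_, ?_, ?_⟩
  · rw [Finset.card_image_of_injective _ (fun u v huv => Nat.eq_of_mul_eq_mul_left hℓ0 huv)]
    exact hcW
  · rw [Finset.card_image_of_injOn, Finset.card_product, Finset.card_range, hcX, mul_comm]
    rintro ⟨x, j⟩ hp ⟨x', j'⟩ hq hpq
    simp only [Finset.coe_product, Finset.mem_coe, Set.mem_prod, Finset.mem_product,
      Finset.mem_range, Finset.mem_coe] at hp hq
    obtain ⟨heq1, heq2⟩ := key_unique_s13 ℓ x x' j j' (hX1 x hp.1) (hX1 x' hq.1) hp.2 hq.2 hpq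
    simp [heq1, heq2]
  · intro z hz y hy
    simp only [Finset.mem_image, Finset.mem_product, Finset.mem_range] at hz hy
    obtain ⟨w, hwW, rfl⟩ := hz
    obtain ⟨⟨x, j⟩, ⟨hxX, hjℓ⟩, rfl⟩ := hy
    have hwx := hlt w hwW x hxX
    have h1 := hmul w x hwx
    have h2 : ℓ ≤ ℓ * (x - w) := Nat.le_mul_of_pos_right ℓ (by omega)
    show ℓ * w < ℓ * x - j
    omega
  · rintro ⟨p1, p2⟩ hp ⟨q1, q2⟩ hq hpq
    simp only [Finset.coe_product, Set.mem_prod, Finset.mem_coe, Finset.mem_image,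
      Finset.mem_product, Finset.mem_range] at hp hq
    obtain ⟨⟨⟨x, j⟩, ⟨hxX, hjℓ⟩, rfl⟩, ⟨w, hwW, rfl⟩⟩ := hp
    obtain ⟨⟨⟨x', j'⟩, ⟨hxX', hjℓ'⟩, rfl⟩, ⟨w', hwW', rfl⟩⟩ := hq
    have hwx := hlt w hwW x hxX
    have hwx' := hlt w' hwW' x' hxX'
    have e1 : (ℓ * x - j) - ℓ * w = ℓ * (x - w) - j := by
      have := hmul w x hwx; omega
    have e2 : (ℓ * x' - j') - ℓ * w' = ℓ * (x' - w') - j' := by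
      have := hmul w' x' hwx'; omega
    simp only at hpq
    rw [e1, e2] at hpq
    obtain ⟨hd, hj⟩ := key_unique_s13 ℓ (x - w) (x' - w') j j' (by omega) (by omega) hjℓ hjℓ' hpq
    have hxw : (x, w) = (x', w') := by
      refine hinj ?_ ?_ hd
      · simp [Finset.mem_coe, hxX, hwW]
      · simp [Finset.mem_coe, hxX', hwW']
    obtain ⟨hx, hw⟩ := Prod.mk.injEq .. ▸ hxw
    simp_all
  · ext n
    simp only [Finset.mem_image, Finset.mem_product, Finset.mem_range, Finset.mem_Icc]
    constructor
    · rintro ⟨⟨y, z⟩, hmem, rfl⟩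
      simp only [Finset.mem_product, Finset.mem_image, Finset.mem_range] at hmem
      obtain ⟨⟨⟨x, j⟩, ⟨hxX, hjℓ⟩, rfl⟩, ⟨w, hwW, rfl⟩⟩ := hmem
      have hwx := hlt w hwW x hxX
      have h1 := hmul w x hwx
      have hd : x - w ∈ Finset.Icc 1 (a * b) := by
        rw [← himg]
        have hm : (x, w) ∈ X ×ˢ W := Finset.mem_product.mpr ⟨hxX, hwW⟩
        exact Finset.mem_image_of_mem _ hm
      rw [Finset.mem_Icc] at hd
      have h2 : ℓ * (x - w) ≤ ℓ * (a * b) := Nat.mul_le_mul_left ℓ hd.2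
      have h3 : ℓ ≤ ℓ * (x - w) := Nat.le_mul_of_pos_right ℓ (by omega)
      have h4 : a * (ℓ * b) = ℓ * (a * b) := by ring
      show 1 ≤ (ℓ * x - j) - ℓ * w ∧ (ℓ * x - j) - ℓ * w ≤ a * (ℓ * b)
      omega
    · intro hn
      obtain ⟨q, r, hrℓ, hqr⟩ : ∃ q r, r < ℓ ∧ n - 1 = ℓ * q + r :=
        ⟨(n - 1) / ℓ, (n - 1) % ℓ, Nat.mod_lt _ hℓ0, (Nat.div_add_mod _ _).symm⟩
      have hqlt : q < a * b := by
        by_contra hcon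
        push_neg at hcon
        have h5 : ℓ * (a * b) ≤ ℓ * q := Nat.mul_le_mul_left ℓ hcon
        have h4 : a * (ℓ * b) = ℓ * (a * b) := by ring
        omega
      have hdIcc : q + 1 ∈ Finset.Icc 1 (a * b) := by
        rw [Finset.mem_Icc]; omega
      rw [← himg, Finset.mem_image] at hdIcc
      obtain ⟨⟨x, w⟩, hmemXW, hd⟩ := hdIcc
      rw [Finset.mem_product] at hmemXW
      obtain ⟨hxX, hwW⟩ := hmemXW
      simp only at hd
      have hwx := hlt w hwW x hxX
      have h1 := hmul w x hwx
      have h2 : ℓ * (x - w) = ℓ * q + ℓ := by rw [hd, Nat.mul_succ]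
      refine ⟨(ℓ * x - (ℓ - 1 - r), ℓ * w), ?_, ?_⟩
      · simp only [Finset.mem_product, Finset.mem_image, Finset.mem_range]
        exact ⟨⟨(x, ℓ - 1 - r), ⟨hxX, by omega⟩, rfl⟩, ⟨w, hwW, rfl⟩⟩
      · show (ℓ * x - (ℓ - 1 - r)) - ℓ * w = n
        omega
end

section
/- Let (A, B) be an α-valuation of the complete bipartite graph K_{a,a}. Then the images of A and B under reduction modulo a²+1 form an (a²+1, 2, a; 1)-SEDF in the cyclic group Z_{a²+1}: the reduced sets Ā and B̄ are disjoint subsets of Z_{a²+1} of size a each, and each of the multisets {x − y : x ∈ Ā, y ∈ B̄} and {y − x : x ∈ Ā, y ∈ B̄} contains every nonzero element of Z_{a²+1} exactly once. -/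
/-- An `(n, 2, k; 1)`-SEDF in the cyclic group `ZMod n`: a pair `(A, B)` of disjoint
`k`-element subsets such that each of the multisets `{x - y : x ∈ A, y ∈ B}` and
`{y - x : x ∈ A, y ∈ B}` contains every nonzero element of `ZMod n` exactly once. -/
def IsSEDF (n k : ℕ) (A B : Finset (ZMod n)) : Prop :=
  Disjoint A B ∧ A.card = k ∧ B.card = k ∧
  (∀ d : ZMod n, d ≠ 0 →
    ∃! p : ZMod n × ZMod n, p.1 ∈ A ∧ p.2 ∈ B ∧ p.1 - p.2 = d) ∧
  (∀ d : ZMod n, d ≠ 0 →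
    ∃! p : ZMod n × ZMod n, p.1 ∈ A ∧ p.2 ∈ B ∧ p.2 - p.1 = d)

lemma diff_mem {a : ℕ} {A B : Finset ℕ} (h : IsAlphaValuation a a A B)
    {z y : ℕ} (hz : z ∈ A) (hy : y ∈ B) : 1 ≤ y - z ∧ y - z ≤ a ^ 2 := by
  have him := h.2.2.2.2.2.2
  have : y - z ∈ (B ×ˢ A).image (fun p : ℕ × ℕ => p.1 - p.2) :=
    Finset.mem_image.mpr ⟨(y, z), Finset.mem_product.mpr ⟨hy, hz⟩, rfl⟩
  rw [him, Finset.mem_Icc] at this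
  refine ⟨this.1, ?_⟩
  calc y - z ≤ a * a := this.2
    _ = a ^ 2 := (sq a).symm

lemma key {a : ℕ} {A B : Finset ℕ} (h : IsAlphaValuation a a A B)
    (d : ZMod (a ^ 2 + 1)) (hd : d ≠ 0) :
    ∃! p : ZMod (a ^ 2 + 1) × ZMod (a ^ 2 + 1),
      p.1 ∈ A.image (fun z : ℕ => (z : ZMod (a ^ 2 + 1))) ∧
      p.2 ∈ B.image (fun y : ℕ => (y : ZMod (a ^ 2 + 1))) ∧ p.2 - p.1 = d := by
  have hlt := h.2.2.2.2.1
  have hinj := h.2.2.2.2.2.1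
  have him := h.2.2.2.2.2.2
  have hvlt : d.val < a ^ 2 + 1 := ZMod.val_lt d
  have hv0 : d.val ≠ 0 := fun hc => hd (by rwa [ZMod.val_eq_zero] at hc)
  have hmem : d.val ∈ (B ×ˢ A).image (fun p : ℕ × ℕ => p.1 - p.2) := by
    rw [him, Finset.mem_Icc]
    constructor
    · omega
    · have : a * a = a ^ 2 := (sq a).symm
      omega
  obtain ⟨⟨y, z⟩, hmem', hyz⟩ := Finset.mem_image.mp hmem
  obtain ⟨hy, hz⟩ := Finset.mem_product.mp hmem'
  simp only at hyz
  refine ⟨(↑z, ↑y), ⟨Finset.mem_image_of_mem _ hz, Finset.mem_image_of_mem _ hy, ?_⟩, ?_⟩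
  · have hle : z ≤ y := (hlt z hz y hy).le
    rw [show ((y : ZMod (a ^ 2 + 1)) - z) = ((y - z : ℕ) : ZMod (a ^ 2 + 1)) from
      (Nat.cast_sub hle).symm, hyz]
    simp [ZMod.natCast_val, ZMod.cast_id]
  · rintro ⟨p1, p2⟩ ⟨hp1, hp2, hpd⟩
    obtain ⟨z', hz', rfl⟩ := Finset.mem_image.mp hp1
    obtain ⟨y', hy', rfl⟩ := Finset.mem_image.mp hp2
    have hle' : z' ≤ y' := (hlt z' hz' y' hy').le
    have h1 : ((y' - z' : ℕ) : ZMod (a ^ 2 + 1)) = d := by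
      rw [Nat.cast_sub hle']; exact hpd
    have hb := diff_mem h hz' hy'
    have h2 : y' - z' = d.val := by
      rw [← h1, ZMod.val_cast_of_lt (by omega)]
    have h3 : ((y', z') : ℕ × ℕ) = (y, z) := by
      apply hinj (Finset.mem_coe.mpr (Finset.mem_product.mpr ⟨hy', hz'⟩))
        (Finset.mem_coe.mpr (Finset.mem_product.mpr ⟨hy, hz⟩))
      simp only
      omega
    have e1 : y' = y := congrArg Prod.fst h3
    have e2 : z' = z := congrArg Prod.snd h3
    subst e1; subst e2; rfl

lemma cast_injOn_A {a : ℕ} {A B : Finset ℕ} (h : IsAlphaValuation a a A B) :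
    Set.InjOn (fun z : ℕ => (z : ZMod (a ^ 2 + 1))) ↑A := by
  have hB : B.Nonempty := Finset.card_pos.mp (by rw [h.2.2.2.1]; exact h.1)
  obtain ⟨y, hy⟩ := hB
  intro z hz z' hz' heq
  have hlt := h.2.2.2.2.1
  have d1 := diff_mem h hz hy
  have d2 := diff_mem h hz' hy
  have hzy := hlt z hz y hy
  have hzy' := hlt z' hz' y hy
  have hmod : z ≡ z' [MOD a ^ 2 + 1] := (ZMod.natCast_eq_natCast_iff _ _ _).mp heq
  rcases le_total z z' with hle | hle
  · have hdvd : a ^ 2 + 1 ∣ z' - z := (Nat.modEq_iff_dvd' hle).mp hmod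
    have := Nat.eq_zero_of_dvd_of_lt hdvd (by omega)
    omega
  · have hdvd : a ^ 2 + 1 ∣ z - z' := (Nat.modEq_iff_dvd' hle).mp hmod.symm
    have := Nat.eq_zero_of_dvd_of_lt hdvd (by omega)
    omega

lemma cast_injOn_B {a : ℕ} {A B : Finset ℕ} (h : IsAlphaValuation a a A B) :
    Set.InjOn (fun y : ℕ => (y : ZMod (a ^ 2 + 1))) ↑B := by
  have hA : A.Nonempty := Finset.card_pos.mp (by rw [h.2.2.1]; exact h.1)
  obtain ⟨z, hz⟩ := hA
  intro y hy y' hy' heq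
  have hlt := h.2.2.2.2.1
  have d1 := diff_mem h hz hy
  have d2 := diff_mem h hz hy'
  have hzy := hlt z hz y hy
  have hzy' := hlt z hz y' hy'
  have hmod : y ≡ y' [MOD a ^ 2 + 1] := (ZMod.natCast_eq_natCast_iff _ _ _).mp heq
  rcases le_total y y' with hle | hle
  · have hdvd : a ^ 2 + 1 ∣ y' - y := (Nat.modEq_iff_dvd' hle).mp hmod
    have := Nat.eq_zero_of_dvd_of_lt hdvd (by omega)
    omega
  · have hdvd : a ^ 2 + 1 ∣ y - y' := (Nat.modEq_iff_dvd' hle).mp hmod.symm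
    have := Nat.eq_zero_of_dvd_of_lt hdvd (by omega)
    omega

theorem stmt_15 (a : ℕ) (A B : Finset ℕ) (h : IsAlphaValuation a a A B) :
    IsSEDF (a ^ 2 + 1) a
      (A.image (fun z : ℕ => (z : ZMod (a ^ 2 + 1))))
      (B.image (fun y : ℕ => (y : ZMod (a ^ 2 + 1)))) := by
  refine ⟨?_, ?_, ?_, ?_, ?_⟩
  · rw [Finset.disjoint_left]
    rintro x hx hx'
    obtain ⟨z, hz, rfl⟩ := Finset.mem_image.mp hx
    obtain ⟨y, hy, heq⟩ := Finset.mem_image.mp hx'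
    have d1 := diff_mem h hz hy
    have hzy := h.2.2.2.2.1 z hz y hy
    have hmod : y ≡ z [MOD a ^ 2 + 1] := (ZMod.natCast_eq_natCast_iff _ _ _).mp heq
    have hdvd : a ^ 2 + 1 ∣ y - z := (Nat.modEq_iff_dvd' hzy.le).mp hmod.symm
    have := Nat.eq_zero_of_dvd_of_lt hdvd (by omega)
    omega
  · rw [Finset.card_image_of_injOn (cast_injOn_A h), h.2.2.1]
  · rw [Finset.card_image_of_injOn (cast_injOn_B h), h.2.2.2.1]
  · intro d hd
    obtain ⟨p, hp, hu⟩ := key h (-d) (neg_ne_zero.mpr hd)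
    refine ⟨p, ⟨hp.1, hp.2.1, ?_⟩, fun q hq => hu q ⟨hq.1, hq.2.1, ?_⟩⟩
    · rw [← neg_sub p.2 p.1, hp.2.2, neg_neg]
    · rw [← neg_sub q.1 q.2, hq.2.2]
  · intro d hd
    exact key h d hd
end

section
/- Suppose (A, B) is an (a²+1, 2, a; 1)-SEDF in the cyclic group Z_{a²+1}. Then there exist elements g, h ∈ Z_{a²+1} such that −A = g + A and −B = h + B, where −S = {−x : x ∈ S} and g + S = {g + x : x ∈ S}. -/
open Finset

lemma aux_symm {n : ℕ} [NeZero n] (X Y : Finset (ZMod n)) (z : ZMod n)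
    (HX : ∀ t : ZMod n, ((X ×ˢ Y).filter (fun p => p.1 - p.2 = t)).card = if t = 0 then 0 else 1)
    (HS : ∀ w : ZMod n, ((X ×ˢ Y).filter (fun p => p.1 + p.2 = w)).card = if w = z then 0 else 1) :
    X.image (fun x => z - x) = X := by
  classical
  set X' := X.image (fun x => z - x) with hX'
  have memX' : ∀ g : ZMod n, g ∈ X' ↔ z - g ∈ X := by
    intro g
    simp only [hX', Finset.mem_image]
    constructor
    · rintro ⟨x, hx, rfl⟩; simpa [sub_sub_cancel] using hx
    · intro hxx; exact ⟨z - g, hxx, by ring⟩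
  set f : ZMod n → ℤ := fun g => (if g ∈ X' then 1 else 0) - (if g ∈ X then 1 else 0) with hf
  have hcard : X'.card = X.card := Finset.card_image_of_injective _ sub_right_injective
  have hcount1 : ∀ s : ZMod n, (Y.filter (fun b => s + b ∈ X)).card = if s = 0 then 0 else 1 := by
    intro s
    rw [← HX s]
    apply Finset.card_bij (fun b _ => ((s + b, b) : ZMod n × ZMod n))
    · intro b hb
      simp only [Finset.mem_filter, Finset.mem_product] at hb ⊢
      exact ⟨⟨hb.2, hb.1⟩, by ring⟩
    · intro b hb b' hb' hh
      exact (Prod.ext_iff.mp hh).2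
    · intro p hp
      simp only [Finset.mem_filter, Finset.mem_product] at hp
      have hpe : p.1 = s + p.2 := by
        have := hp.2; linear_combination this
      refine ⟨p.2, Finset.mem_filter.mpr ⟨hp.1.2, hpe ▸ hp.1.1⟩, ?_⟩
      rw [Prod.ext_iff]
      exact ⟨hpe.symm, rfl⟩
  have hcount2 : ∀ s : ZMod n, (Y.filter (fun b => s + b ∈ X')).card = if s = 0 then 0 else 1 := by
    intro s
    have key : (Y.filter (fun b => s + b ∈ X')).card
        = ((X ×ˢ Y).filter (fun p => p.1 + p.2 = z - s)).card := by
      apply Finset.card_bij (fun b _ => ((z - (s + b), b) : ZMod n × ZMod n))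
      · intro b hb
        simp only [Finset.mem_filter, Finset.mem_product] at hb ⊢
        exact ⟨⟨(memX' _).mp hb.2, hb.1⟩, by ring⟩
      · intro b _ b' _ hh; exact (Prod.ext_iff.mp hh).2
      · intro p hp
        simp only [Finset.mem_filter, Finset.mem_product] at hp
        have hpe : z - (s + p.2) = p.1 := by linear_combination -hp.2
        refine ⟨p.2, Finset.mem_filter.mpr ⟨hp.1.2, (memX' _).mpr (hpe ▸ hp.1.1)⟩, ?_⟩
        rw [Prod.ext_iff]
        exact ⟨hpe, rfl⟩
    rw [key, HS]
    simp [sub_eq_self]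
  have hrow : ∀ s : ZMod n, ∑ b ∈ Y, f (s + b) = 0 := by
    intro s
    simp only [hf]
    rw [Finset.sum_sub_distrib, Finset.sum_boole, Finset.sum_boole, hcount1, hcount2]
    split <;> simp
  have hsum : ∑ g : ZMod n, f g = 0 := by
    simp only [hf]
    rw [Finset.sum_sub_distrib, Finset.sum_boole, Finset.sum_boole]
    have e1 : Finset.univ.filter (fun g => g ∈ X') = X' := by ext g; simp
    have e2 : Finset.univ.filter (fun g => g ∈ X) = X := by ext g; simp
    rw [e1, e2, hcard]
    ring
  have main : ∀ g : ZMod n, f g = 0 := by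
    intro g
    have way1 : ∑ p ∈ X ×ˢ Y, f (g - p.1 + p.2) = 0 := by
      rw [Finset.sum_product]
      apply Finset.sum_eq_zero
      intro x _
      exact hrow (g - x)
    have way2 : ∑ p ∈ X ×ˢ Y, f (g - p.1 + p.2) = - f g := by
      have e1 : ∀ p : ZMod n × ZMod n, g - p.1 + p.2 = g - (p.1 - p.2) := fun p => by ring
      have h0 : ∑ t : ZMod n, f (g - t) = 0 := by
        rw [← hsum]
        exact Fintype.sum_bijective _ (Equiv.subLeft g).bijective _ _ (fun t => rfl)
      calc ∑ p ∈ X ×ˢ Y, f (g - p.1 + p.2)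
          = ∑ p ∈ X ×ˢ Y, f (g - (p.1 - p.2)) := by simp_rw [e1]
        _ = ∑ t : ZMod n, ∑ p ∈ (X ×ˢ Y).filter (fun p => p.1 - p.2 = t), f (g - (p.1 - p.2)) :=
            (Finset.sum_fiberwise _ _ _).symm
        _ = ∑ t : ZMod n, (if t = 0 then 0 else f (g - t)) := by
            refine Finset.sum_congr rfl fun t _ => ?_
            have e2 : ∑ p ∈ (X ×ˢ Y).filter (fun p => p.1 - p.2 = t), f (g - (p.1 - p.2))
                = ∑ p ∈ (X ×ˢ Y).filter (fun p => p.1 - p.2 = t), f (g - t) :=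
              Finset.sum_congr rfl (fun p hp => by rw [(Finset.mem_filter.mp hp).2])
            rw [e2, Finset.sum_const, HX t]
            split <;> simp
        _ = - f g := by
            have e3 : ∀ t : ZMod n,
                (if t = 0 then (0:ℤ) else f (g - t)) = f (g - t) - (if t = 0 then f (g - t) else 0) := by
              intro t; split <;> simp
            simp_rw [e3]
            rw [Finset.sum_sub_distrib, h0, Finset.sum_ite_eq' Finset.univ (0 : ZMod n) (fun t => f (g - t))]
            simp
    have := way1.symm.trans way2
    linarith [this]
  apply Finset.ext
  intro g
  have hg := main g
  simp only [hf] at hg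
  show g ∈ X' ↔ g ∈ X
  constructor <;> intro hmem
  · by_contra hc; simp [hmem, hc] at hg
  · by_contra hc; simp [hmem, hc] at hg

theorem stmt_16 (a : ℕ) (ha : 0 < a) (A B : Finset (ZMod (a ^ 2 + 1)))
    (h : IsSEDF (a ^ 2 + 1) a A B) :
    ∃ g h' : ZMod (a ^ 2 + 1),
      A.image (fun x => -x) = A.image (fun x => g + x) ∧
      B.image (fun x => -x) = B.image (fun x => h' + x) := by
  classical
  obtain ⟨hdisj, hcardA, hcardB, hd1, hd2⟩ := h
  have HX1 : ∀ t : ZMod (a ^ 2 + 1),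
      ((A ×ˢ B).filter (fun p => p.1 - p.2 = t)).card = if t = 0 then 0 else 1 := by
    intro t
    split_ifs with ht
    · subst ht
      rw [Finset.card_eq_zero, Finset.filter_eq_empty_iff]
      intro p hp hpd
      rw [Finset.mem_product] at hp
      rw [sub_eq_zero] at hpd
      exact Finset.disjoint_left.mp hdisj hp.1 (hpd ▸ hp.2)
    · obtain ⟨p₀, ⟨hp1, hp2, hp3⟩, huniq⟩ := hd1 t ht
      have e : (A ×ˢ B).filter (fun p => p.1 - p.2 = t) = {p₀} := by
        ext q
        simp only [Finset.mem_filter, Finset.mem_product, Finset.mem_singleton]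
        constructor
        · rintro ⟨⟨hq1, hq2⟩, hq3⟩; exact huniq q ⟨hq1, hq2, hq3⟩
        · rintro rfl; exact ⟨⟨hp1, hp2⟩, hp3⟩
      rw [e, Finset.card_singleton]
  have hinj : Set.InjOn (fun p : ZMod (a ^ 2 + 1) × ZMod (a ^ 2 + 1) => p.1 + p.2)
      ((A ×ˢ B : Finset _) : Set _) := by
    intro p hp q hq hpq
    simp only [Finset.coe_product, Set.mem_prod, Finset.mem_coe] at hp hq
    by_cases hpe : p.1 - q.2 = 0
    · exact absurd (Finset.disjoint_left.mp hdisj hp.1 ((sub_eq_zero.mp hpe) ▸ hq.2)) (fun c => c)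
    · obtain ⟨p₀, _, huniq⟩ := hd1 (p.1 - q.2) hpe
      have h1 : ((p.1, q.2) : _ × _) = p₀ := huniq _ ⟨hp.1, hq.2, rfl⟩
      have h2 : ((q.1, p.2) : _ × _) = p₀ := huniq _ ⟨hq.1, hp.2, by dsimp; linear_combination -hpq⟩
      have := h1.trans h2.symm
      rw [Prod.ext_iff] at this
      exact Prod.ext this.1 this.2.symm
  set I : Finset (ZMod (a ^ 2 + 1)) := (A ×ˢ B).image (fun p => p.1 + p.2) with hI
  have hIcard : I.card = a ^ 2 := by
    rw [hI, Finset.card_image_of_injOn hinj, Finset.card_product, hcardA, hcardB, sq]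
  have hcompl : (Finset.univ \ I).card = 1 := by
    rw [Finset.card_sdiff_of_subset (Finset.subset_univ _), Finset.card_univ, ZMod.card, hIcard]
    omega
  obtain ⟨z, hz⟩ := Finset.card_eq_one.mp hcompl
  have hzmem : ∀ w : ZMod (a ^ 2 + 1), w ∉ I ↔ w = z := by
    intro w
    rw [← Finset.mem_singleton, ← hz, Finset.mem_sdiff]
    simp
  have HS1 : ∀ w : ZMod (a ^ 2 + 1),
      ((A ×ˢ B).filter (fun p => p.1 + p.2 = w)).card = if w = z then 0 else 1 := by
    intro w
    split_ifs with hw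
    · subst hw
      rw [Finset.card_eq_zero, Finset.filter_eq_empty_iff]
      intro p hp hpw
      exact (hzmem w).mpr rfl (Finset.mem_image.mpr ⟨p, hp, hpw⟩)
    · have hwI : w ∈ I := by
        by_contra hc; exact hw ((hzmem w).mp hc)
      obtain ⟨p₀, hp₀, hp₀w⟩ := Finset.mem_image.mp hwI
      have e : (A ×ˢ B).filter (fun p => p.1 + p.2 = w) = {p₀} := by
        ext q
        simp only [Finset.mem_filter, Finset.mem_singleton]
        constructor
        · rintro ⟨hq, hqw⟩
          exact hinj (Finset.mem_coe.mpr hq) (Finset.mem_coe.mpr hp₀) (hqw.trans hp₀w.symm)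
        · rintro rfl; exact ⟨hp₀, hp₀w⟩
      rw [e, Finset.card_singleton]
  have HX2 : ∀ t : ZMod (a ^ 2 + 1),
      ((B ×ˢ A).filter (fun p => p.1 - p.2 = t)).card = if t = 0 then 0 else 1 := by
    intro t
    split_ifs with ht
    · subst ht
      rw [Finset.card_eq_zero, Finset.filter_eq_empty_iff]
      intro p hp hpd
      rw [Finset.mem_product] at hp
      rw [sub_eq_zero] at hpd
      exact Finset.disjoint_left.mp hdisj (hpd ▸ hp.2) hp.1
    · obtain ⟨p₀, ⟨hp1, hp2, hp3⟩, huniq⟩ := hd2 t ht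
      have e : (B ×ˢ A).filter (fun p => p.1 - p.2 = t) = {(p₀.2, p₀.1)} := by
        ext q
        simp only [Finset.mem_filter, Finset.mem_product, Finset.mem_singleton]
        constructor
        · rintro ⟨⟨hq1, hq2⟩, hq3⟩
          have hu := huniq (q.2, q.1) ⟨hq2, hq1, hq3⟩
          rw [Prod.ext_iff] at hu
          rw [Prod.ext_iff]
          exact ⟨hu.2, hu.1⟩
        · rintro rfl; exact ⟨⟨hp2, hp1⟩, hp3⟩
      rw [e, Finset.card_singleton]
  have HS2 : ∀ w : ZMod (a ^ 2 + 1),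
      ((B ×ˢ A).filter (fun p => p.1 + p.2 = w)).card = if w = z then 0 else 1 := by
    intro w
    rw [← HS1 w]
    apply Finset.card_bij (fun q _ => ((q.2, q.1) : ZMod (a ^ 2 + 1) × ZMod (a ^ 2 + 1)))
    · intro q hq
      simp only [Finset.mem_filter, Finset.mem_product] at hq ⊢
      exact ⟨⟨hq.1.2, hq.1.1⟩, (add_comm q.2 q.1).trans hq.2⟩
    · intro q _ q' _ hh
      rw [Prod.ext_iff] at hh
      exact Prod.ext hh.2 hh.1
    · intro p hp
      simp only [Finset.mem_filter, Finset.mem_product] at hp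
      refine ⟨(p.2, p.1), ?_, rfl⟩
      simp only [Finset.mem_filter, Finset.mem_product]
      exact ⟨⟨hp.1.2, hp.1.1⟩, (add_comm p.2 p.1).trans hp.2⟩
  have hA := aux_symm A B z HX1 HS1
  have hB := aux_symm B A z HX2 HS2
  refine ⟨-z, -z, ?_, ?_⟩
  · have e : A.image (fun x => -z + x) = (A.image (fun x => z - x)).image (fun x => -z + x) := by
      rw [hA]
    rw [e, Finset.image_image]
    apply Finset.image_congr
    intro x _
    show -x = -z + (z - x)
    ring
  · have e : B.image (fun x => -z + x) = (B.image (fun x => z - x)).image (fun x => -z + x) := by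
      rw [hB]
    rw [e, Finset.image_image]
    apply Finset.image_congr
    intro x _
    show -x = -z + (z - x)
    ring
end

section
/- Suppose (A, B) is an (a²+1, 2, a; 1)-SEDF in the cyclic group Z_{a²+1}. Then there exists an element g ∈ Z_{a²+1} such that g + A = −(g + A) and g + B = −(g + B), where g + S = {g + x : x ∈ S} and −S = {−x : x ∈ S}; that is, some common translate of the pair (A, B) is symmetric. -/
open Finset AddMonoidAlgebra

section Aux

variable {M : Type*} [AddCommGroup M] [Fintype M] [DecidableEq M]

/-- indicator-style element of the group algebra -/
noncomputable def ind {ι : Type*} (S : Finset ι) (φ : ι → M) : AddMonoidAlgebra ℤ M :=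
  ∑ x ∈ S, AddMonoidAlgebra.single (φ x) 1

omit [AddCommGroup M] [Fintype M] in
lemma ind_apply {ι : Type*} [AddCommMonoid M] (S : Finset ι) (φ : ι → M) (c : M) :
    (ind S φ).coeff c = ∑ x ∈ S, if φ x = c then 1 else 0 := by
  rw [ind, AddMonoidAlgebra.coeff_sum, Finset.sum_apply']
  exact Finset.sum_congr rfl fun x _ => by simp [AddMonoidAlgebra.coeff_single, Finsupp.single_apply]

omit [Fintype M] [DecidableEq M] in
lemma ind_mul {ι κ : Type*} (S : Finset ι) (T : Finset κ) (φ : ι → M) (ψ : κ → M) :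
    ind S φ * ind T ψ = ind (S ×ˢ T) (fun p => φ p.1 + ψ p.2) := by
  rw [ind, ind, ind, Finset.sum_mul_sum, Finset.sum_product]
  refine Finset.sum_congr rfl fun x _ => Finset.sum_congr rfl fun y _ => ?_
  rw [AddMonoidAlgebra.single_mul_single, one_mul]

lemma sigma_apply (c : M) : (ind (univ : Finset M) id).coeff c = 1 := by
  rw [ind_apply]
  simp

lemma single_mul_sigma (z : M) :
    (AddMonoidAlgebra.single z 1 : AddMonoidAlgebra ℤ M) * ind (univ : Finset M) id
      = ind (univ : Finset M) id := by
  ext c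
  rw [AddMonoidAlgebra.coeff_single_mul_apply, sigma_apply, sigma_apply, one_mul]

lemma ind_mul_sigma {ι : Type*} (S : Finset ι) (φ : ι → M) :
    ind S φ * ind (univ : Finset M) id = S.card • ind (univ : Finset M) id := by
  rw [ind, Finset.sum_mul]
  rw [Finset.sum_congr rfl fun x (_ : x ∈ S) => single_mul_sigma (M := M) (φ x)]
  simp [Finset.sum_const]

end Aux

section Key

variable {M : Type*} [AddCommGroup M] [Fintype M] [DecidableEq M]

lemma key_s17 (A B : Finset M)
    (h1 : ind A id * ind B (fun x => -x) = ind (univ : Finset M) id - 1)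
    (h2 : ind A (fun x => -x) * ind B id = ind (univ : Finset M) id - 1)
    (hcard : A.card * B.card = Fintype.card M - 1) :
    ∃ z : M, (∀ x, x ∈ A ↔ z - x ∈ A) ∧ (∀ x, x ∈ B ↔ z - x ∈ B) := by
  classical
  set σ : AddMonoidAlgebra ℤ M := ind (univ : Finset M) id with hσ
  set s : AddMonoidAlgebra ℤ M := ind A id * ind B id with hsdef
  have hcardpos : 0 < Fintype.card M := Fintype.card_pos
  have hs_apply : ∀ d : M, s.coeff d = ∑ q ∈ A ×ˢ B, if q.1 + q.2 = d then (1:ℤ) else 0 := by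
    intro d
    rw [hsdef, ind_mul, ind_apply]
    simp only [id_eq]
  -- the ring identity
  have E1 : s * (ind A (fun x => -x) * ind B (fun x => -x)) = (σ - 1) * (σ - 1) := by
    have h : s * (ind A (fun x => -x) * ind B (fun x => -x))
        = (ind A id * ind B (fun x => -x)) * (ind A (fun x => -x) * ind B id) := by
      rw [hsdef]; ring
    rw [h, h1, h2]
  -- coefficient of the RHS at 0
  have hRHS : ((σ - 1) * (σ - 1)).coeff 0 = (Fintype.card M : ℤ) - 1 := by
    have hexp : (σ - 1) * (σ - 1) = σ * σ - σ - σ + 1 := by ring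
    have hσσ : (σ * σ).coeff (0 : M) = (Fintype.card M : ℤ) := by
      rw [hσ, ind_mul, ind_apply, Finset.sum_product]
      simp only [id_eq]
      have hin : ∀ x : M, (∑ y : M, if (x + y : M) = 0 then (1:ℤ) else 0) = 1 := by
        intro x
        rw [Finset.sum_congr rfl fun y (_ : y ∈ univ) =>
          if_congr (by rw [add_comm, add_eq_zero_iff_eq_neg]) rfl rfl]
        simp
      rw [Finset.sum_congr rfl fun x (_ : x ∈ univ) => hin x]
      simp [mul_comm]
    have h1c : ((1 : AddMonoidAlgebra ℤ M)).coeff (0 : M) = 1 := by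
      rw [AddMonoidAlgebra.one_def]; simp
    rw [hexp, AddMonoidAlgebra.coeff_add, Finsupp.add_apply, AddMonoidAlgebra.coeff_sub, Finsupp.sub_apply,
      AddMonoidAlgebra.coeff_sub, Finsupp.sub_apply, hσσ, h1c,
      sigma_apply]
    ring
  -- sum of squares of coefficients of s
  have hsq : ∑ d : M, s.coeff d * s.coeff d = (Fintype.card M : ℤ) - 1 := by
    have hLHS : (s * (ind A (fun x => -x) * ind B (fun x => -x))).coeff 0
        = ∑ q ∈ A ×ˢ B, s.coeff (q.1 + q.2) := by
      rw [hsdef, ind_mul, ind_mul, ind_mul, ind_apply, Finset.sum_product]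
      simp only [id_eq]
      rw [Finset.sum_comm]
      refine Finset.sum_congr rfl fun q _ => ?_
      rw [ind_apply]
      refine Finset.sum_congr rfl fun p _ => if_congr ?_ rfl rfl
      rw [show (-q.1 + -q.2 : M) = -(q.1 + q.2) by abel, add_neg_eq_zero]
    have hmain : ∑ d : M, s.coeff d * s.coeff d = ∑ q ∈ A ×ˢ B, s.coeff (q.1 + q.2) := by
      have : ∀ d : M, s.coeff d * s.coeff d
          = ∑ q ∈ A ×ˢ B, if q.1 + q.2 = d then s.coeff d else 0 := by
        intro d
        nth_rewrite 2 [hs_apply d]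
        rw [Finset.mul_sum]
        exact Finset.sum_congr rfl fun q _ => by rw [mul_ite, mul_one, mul_zero]
      rw [Finset.sum_congr rfl fun d (_ : d ∈ univ) => this d, Finset.sum_comm]
      refine Finset.sum_congr rfl fun q _ => ?_
      rw [Finset.sum_congr rfl fun d (_ : d ∈ univ) => if_congr (eq_comm) rfl rfl]
      simp
    rw [hmain, ← hLHS, E1, hRHS]
  -- sum of coefficients of s
  have hsum : ∑ d : M, s.coeff d = (Fintype.card M : ℤ) - 1 := by
    rw [Finset.sum_congr rfl fun d (_ : d ∈ univ) => hs_apply d, Finset.sum_comm]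
    have : ∀ q : M × M, q ∈ A ×ˢ B → (∑ d : M, if q.1 + q.2 = d then (1:ℤ) else 0) = 1 := by
      intro q _
      rw [Finset.sum_congr rfl fun d (_ : d ∈ univ) => if_congr (eq_comm) rfl rfl]
      simp
    rw [Finset.sum_congr rfl this]
    rw [Finset.sum_const, Finset.card_product, nsmul_eq_mul, mul_one]
    rw [hcard, Nat.cast_sub hcardpos, Nat.cast_one]
  -- each coefficient is 0 or 1
  have hnonneg : ∀ d : M, 0 ≤ s.coeff d := by
    intro d
    rw [hs_apply]
    exact Finset.sum_nonneg fun q _ => by positivity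
  have h01 : ∀ d : M, s.coeff d = 0 ∨ s.coeff d = 1 := by
    have hzero : ∑ d : M, s.coeff d * (s.coeff d - 1) = 0 := by
      rw [Finset.sum_congr rfl fun d (_ : d ∈ univ) =>
        (by ring : s.coeff d * (s.coeff d - 1) = s.coeff d * s.coeff d - s.coeff d), Finset.sum_sub_distrib, hsq, hsum]
      ring
    have hterm : ∀ d : M, d ∈ univ → 0 ≤ s.coeff d * (s.coeff d - 1) := by
      intro d _
      rcases lt_or_ge (s.coeff d) 1 with h | h
      · have h0 : s.coeff d = 0 := le_antisymm (by omega) (hnonneg d)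
        rw [h0]; ring_nf; exact le_refl 0
      · nlinarith
    intro d
    have := (Finset.sum_eq_zero_iff_of_nonneg hterm).mp hzero d (Finset.mem_univ d)
    rcases mul_eq_zero.mp this with h | h
    · exact Or.inl h
    · exact Or.inr (by linarith [sub_eq_zero.mp h])
  -- there is a unique missing element z
  have hZ : (univ.filter (fun d : M => s.coeff d = 0)).card = 1 := by
    have hsplit := Finset.sum_filter_add_sum_filter_not (univ : Finset M)
      (fun d : M => s.coeff d = 0) s.coeff
    have hz1 : ∑ d ∈ univ.filter (fun d : M => s.coeff d = 0), s.coeff d = 0 :=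
      Finset.sum_eq_zero fun d hd => (Finset.mem_filter.mp hd).2
    have hz2 : ∑ d ∈ univ.filter (fun d : M => ¬ s.coeff d = 0), s.coeff d
        = ((univ.filter (fun d : M => ¬ s.coeff d = 0)).card : ℤ) := by
      rw [Finset.sum_congr rfl fun d hd => by
        rcases h01 d with h | h
        · exact absurd h (Finset.mem_filter.mp hd).2
        · exact h]
      simp [mul_comm]
    rw [hz1, zero_add, hz2, hsum] at hsplit
    have hcards := Finset.card_filter_add_card_filter_not
      (s := (univ : Finset M)) (p := fun d : M => s.coeff d = 0)
    rw [Finset.card_univ] at hcards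
    omega
  obtain ⟨z, hz⟩ := Finset.card_eq_one.mp hZ
  have hzz : s.coeff z = 0 := by
    have hmem : z ∈ univ.filter (fun d : M => s.coeff d = 0) := hz ▸ Finset.mem_singleton_self z
    exact (Finset.mem_filter.mp hmem).2
  have hne1 : ∀ d : M, d ≠ z → s.coeff d = 1 := by
    intro d hd
    rcases h01 d with h | h
    · exact absurd (Finset.mem_singleton.mp
        (hz ▸ Finset.mem_filter.mpr ⟨Finset.mem_univ d, h⟩)) hd
    · exact h
  have hsz : s = σ - AddMonoidAlgebra.single z 1 := by
    ext c
    rw [AddMonoidAlgebra.coeff_sub, Finsupp.sub_apply, sigma_apply]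
    by_cases hc : c = z
    · subst hc; rw [hzz, AddMonoidAlgebra.coeff_single, Finsupp.single_apply, if_pos rfl]; ring
    · rw [hne1 c hc, AddMonoidAlgebra.coeff_single, Finsupp.single_apply, if_neg (fun h => hc h.symm)]; ring
  have hzσ : (AddMonoidAlgebra.single z 1 : AddMonoidAlgebra ℤ M) * σ = σ := single_mul_sigma z
  -- the symmetry identity for A
  have hDA : ind A id = AddMonoidAlgebra.single z 1 * ind A (fun x => -x) := by
    rw [← sub_eq_zero]
    set D : AddMonoidAlgebra ℤ M :=
      ind A id - AddMonoidAlgebra.single z 1 * ind A (fun x => -x) with hDdef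
    have hDβ : D * ind B id = 0 := by
      rw [hDdef, sub_mul, ← hsdef, hsz, mul_assoc, h2, mul_sub, hzσ, mul_one]
      ring
    have h3 : D * (σ - 1) = 0 := by
      rw [← h2, mul_left_comm, hDβ, mul_zero]
    have h4 : D * σ = 0 := by
      rw [hDdef, sub_mul, ind_mul_sigma, mul_assoc, ind_mul_sigma, mul_smul_comm, hzσ,
        sub_self]
    rw [mul_sub, h4, mul_one, zero_sub, neg_eq_zero] at h3
    exact h3
  -- the symmetry identity for B
  have hDB : ind B id = AddMonoidAlgebra.single z 1 * ind B (fun x => -x) := by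
    rw [← sub_eq_zero]
    set E : AddMonoidAlgebra ℤ M :=
      ind B id - AddMonoidAlgebra.single z 1 * ind B (fun x => -x) with hEdef
    have hEα : E * ind A id = 0 := by
      rw [hEdef, sub_mul, mul_comm (ind B id), ← hsdef, hsz, mul_assoc,
        mul_comm (ind B fun x => -x), h1, mul_sub, hzσ, mul_one]
      ring
    have h3 : E * (σ - 1) = 0 := by
      rw [← h1, ← mul_assoc, hEα, zero_mul]
    have h4 : E * σ = 0 := by
      rw [hEdef, sub_mul, ind_mul_sigma, mul_assoc, ind_mul_sigma, mul_smul_comm, hzσ,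
        sub_self]
    rw [mul_sub, h4, mul_one, zero_sub, neg_eq_zero] at h3
    exact h3
  -- translate the identities into membership statements
  have hmem : ∀ (S : Finset M),
      ind S id = AddMonoidAlgebra.single z 1 * ind S (fun x => -x) →
      ∀ c : M, c ∈ S ↔ z - c ∈ S := by
    intro S hS c
    have h5 := congrArg (fun f : AddMonoidAlgebra ℤ M => f.coeff c) hS
    rw [ind_apply, AddMonoidAlgebra.coeff_single_mul_apply, ind_apply, one_mul] at h5
    have hL : (∑ x ∈ S, if id x = c then (1:ℤ) else 0) = if c ∈ S then 1 else 0 := by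
      simp only [id_eq]
      exact Finset.sum_ite_eq' S c (fun _ => (1:ℤ))
    have hR : (∑ x ∈ S, if (fun x => -x) x = -z + c then (1:ℤ) else 0)
        = if z - c ∈ S then 1 else 0 := by
      rw [Finset.sum_congr rfl fun x (_ : x ∈ S) => if_congr
        (by rw [show (-z + c : M) = -(z - c) by abel, neg_inj]) rfl rfl]
      exact Finset.sum_ite_eq' S (z - c) (fun _ => (1:ℤ))
    rw [hL, hR] at h5
    constructor
    · intro hx; by_contra hy; rw [if_pos hx, if_neg hy] at h5; exact one_ne_zero h5
    · intro hx; by_contra hy; rw [if_neg hy, if_pos hx] at h5; exact zero_ne_one h5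
  exact ⟨z, hmem A hDA, hmem B hDB⟩

end Key

theorem stmt_17 (a : ℕ) (ha : 0 < a) (A B : Finset (ZMod (a ^ 2 + 1)))
    (h : IsSEDF (a ^ 2 + 1) a A B) :
    ∃ g : ZMod (a ^ 2 + 1),
      (A.image (fun x => g + x)).image (fun x => -x) = A.image (fun x => g + x) ∧
      (B.image (fun x => g + x)).image (fun x => -x) = B.image (fun x => g + x) := by
  classical
  obtain ⟨hdisj, hcA, hcB, hex1, hex2⟩ := h
  have h1 : ind A id * ind B (fun x => -x) = ind (univ : Finset (ZMod (a^2+1))) id - 1 := by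
    rw [ind_mul]
    ext c
    rw [ind_apply, AddMonoidAlgebra.coeff_sub, Finsupp.sub_apply, sigma_apply, AddMonoidAlgebra.one_def,
      AddMonoidAlgebra.coeff_single, Finsupp.single_apply]
    by_cases hc : c = 0
    · subst hc
      rw [if_pos rfl, Finset.sum_eq_zero]
      · ring
      · rintro ⟨x, y⟩ hp
        rw [Finset.mem_product] at hp
        rw [if_neg]
        intro hxy
        simp only [id_eq] at hxy
        have hxy2 : x = y := by
          have : x - y = 0 := by rw [sub_eq_add_neg]; exact hxy
          exact sub_eq_zero.mp this
        exact (Finset.disjoint_left.mp hdisj hp.1) (hxy2 ▸ hp.2)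
    · rw [if_neg (fun hh => hc hh.symm)]
      obtain ⟨p₀, hp₀, huniq⟩ := hex1 c hc
      rw [Finset.sum_eq_single_of_mem p₀ (Finset.mem_product.mpr ⟨hp₀.1, hp₀.2.1⟩)]
      · rw [if_pos]
        · ring
        · simp only [id_eq]
          rw [← sub_eq_add_neg]
          exact hp₀.2.2
      · intro q hq hqne
        rw [Finset.mem_product] at hq
        rw [if_neg]
        intro hq2
        simp only [id_eq] at hq2
        rw [← sub_eq_add_neg] at hq2
        exact hqne (huniq q ⟨hq.1, hq.2, hq2⟩)
  have h2 : ind A (fun x => -x) * ind B id = ind (univ : Finset (ZMod (a^2+1))) id - 1 := by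
    rw [ind_mul]
    ext c
    rw [ind_apply, AddMonoidAlgebra.coeff_sub, Finsupp.sub_apply, sigma_apply, AddMonoidAlgebra.one_def,
      AddMonoidAlgebra.coeff_single, Finsupp.single_apply]
    by_cases hc : c = 0
    · subst hc
      rw [if_pos rfl, Finset.sum_eq_zero]
      · ring
      · rintro ⟨x, y⟩ hp
        rw [Finset.mem_product] at hp
        rw [if_neg]
        intro hxy
        simp only [id_eq] at hxy
        have hxy2 : y = x := by
          rw [neg_add_eq_sub] at hxy
          exact sub_eq_zero.mp hxy
        exact (Finset.disjoint_left.mp hdisj (hxy2 ▸ hp.1)) hp.2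
    · rw [if_neg (fun hh => hc hh.symm)]
      obtain ⟨p₀, hp₀, huniq⟩ := hex2 c hc
      rw [Finset.sum_eq_single_of_mem p₀ (Finset.mem_product.mpr ⟨hp₀.1, hp₀.2.1⟩)]
      · rw [if_pos]
        · ring
        · simp only [id_eq]
          rw [neg_add_eq_sub]
          exact hp₀.2.2
      · intro q hq hqne
        rw [Finset.mem_product] at hq
        rw [if_neg]
        intro hq2
        simp only [id_eq] at hq2
        rw [neg_add_eq_sub] at hq2
        exact hqne (huniq q ⟨hq.1, hq.2, hq2⟩)
  have hcard : A.card * B.card = Fintype.card (ZMod (a^2+1)) - 1 := by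
    rw [hcA, hcB, ZMod.card, Nat.add_sub_cancel, pow_two]
  obtain ⟨z, hAz, hBz⟩ := key_s17 A B h1 h2 hcard
  -- compute z in terms of the sum of A
  have hsumEq : ∑ x ∈ A, x = ∑ x ∈ A, (z - x) := by
    refine Finset.sum_nbij' (i := fun x => z - x) (j := fun x => z - x) ?_ ?_ ?_ ?_ ?_
    · intro x hx; exact (hAz x).mp hx
    · intro x hx; exact (hAz x).mp hx
    · intro x _; simp
    · intro x _; simp
    · intro x _; simp
  have hz2 : 2 * (∑ x ∈ A, x) = (a : ZMod (a^2+1)) * z := by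
    have hd : ∑ x ∈ A, (z - x) = A.card • z - ∑ x ∈ A, x := by
      rw [Finset.sum_sub_distrib, Finset.sum_const]
    rw [hd, hcA, nsmul_eq_mul] at hsumEq
    linear_combination hsumEq
  have h0 : ((a^2 + 1 : ℕ) : ZMod (a^2+1)) = 0 := ZMod.natCast_self _
  push_cast at h0
  have ha2 : ((a : ZMod (a^2+1)))^2 = -1 := by linear_combination h0
  set g : ZMod (a^2+1) := (a : ZMod (a^2+1)) * ∑ x ∈ A, x with hg
  have hzg : z = -(2 * g) := by
    rw [hg]
    linear_combination (a : ZMod (a^2+1)) * hz2 + z * ha2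
  have hfin : ∀ (S : Finset (ZMod (a^2+1))), (∀ x, x ∈ S ↔ z - x ∈ S) →
      (S.image (fun x => g + x)).image (fun x => -x) = S.image (fun x => g + x) := by
    intro S hS
    ext u
    simp only [Finset.mem_image]
    constructor
    · rintro ⟨v, ⟨x, hx, rfl⟩, rfl⟩
      exact ⟨z - x, (hS x).mp hx, by rw [hzg]; ring⟩
    · rintro ⟨x, hx, rfl⟩
      exact ⟨g + (z - x), ⟨z - x, (hS x).mp hx, rfl⟩, by rw [hzg]; ring⟩
  exact ⟨g, hfin A hAz, hfin B hBz⟩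
end

section
/- Let k ≥ 3 be an odd integer and let n = (k²+1)/2, so that 2n − 1 = k². In the dihedral group D_n of order 2n = k²+1 with generators a, b satisfying a² = 1, bⁿ = 1, and aba = b⁻¹, define the subsets A = {bⁱ : 1 ≤ i ≤ (k−1)/2} ∪ {abⁱ : 0 ≤ i ≤ (k−1)/2}, B = {b^{ik} : 0 ≤ i ≤ (k−1)/2} ∪ {ab^{ik} : 1 ≤ i ≤ (k−1)/2}, A₁ = {bⁱ : 0 ≤ i ≤ (k−1)/2} ∪ {abⁱ : 0 ≤ i ≤ (k−3)/2}, and A₂ = {b^{ik} : 1 ≤ i ≤ (k−1)/2} ∪ {ab^{ik+(k−1)/2} : 0 ≤ i ≤ (k−1)/2}. Then, with h = ab^{(k−1)/2}, one has A₁h = A and (A₂h)⁻¹ = h⁻¹A₂⁻¹ = B; consequently the near factorization (A, B) of D_n and the pair (A₁, A₂⁻¹) (arising from the (k²+1, 2, k, 1)-SEDF (A₁, A₂)) are equivalent near factorizations. -/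
open DihedralGroup

/-- The set `A = {b^i : 1 ≤ i ≤ (k-1)/2} ∪ {a b^i : 0 ≤ i ≤ (k-1)/2}` in the dihedral group
`D_{(k²+1)/2}`, where `b^i` is `r i` and `a b^i` is `sr i`. -/
def dihA (k : ℕ) : Finset (DihedralGroup ((k ^ 2 + 1) / 2)) :=
  (Finset.Icc 1 ((k - 1) / 2)).image (fun i : ℕ => r (i : ZMod ((k ^ 2 + 1) / 2))) ∪
  (Finset.Icc 0 ((k - 1) / 2)).image (fun i : ℕ => sr (i : ZMod ((k ^ 2 + 1) / 2)))

/-- The set `B = {b^{ik} : 0 ≤ i ≤ (k-1)/2} ∪ {a b^{ik} : 1 ≤ i ≤ (k-1)/2}`. -/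
def dihB (k : ℕ) : Finset (DihedralGroup ((k ^ 2 + 1) / 2)) :=
  (Finset.Icc 0 ((k - 1) / 2)).image (fun i : ℕ => r ((i * k : ℕ) : ZMod ((k ^ 2 + 1) / 2))) ∪
  (Finset.Icc 1 ((k - 1) / 2)).image (fun i : ℕ => sr ((i * k : ℕ) : ZMod ((k ^ 2 + 1) / 2)))

/-- The set `A₁ = {b^i : 0 ≤ i ≤ (k-1)/2} ∪ {a b^i : 0 ≤ i ≤ (k-3)/2}`. -/
def dihA1 (k : ℕ) : Finset (DihedralGroup ((k ^ 2 + 1) / 2)) :=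
  (Finset.Icc 0 ((k - 1) / 2)).image (fun i : ℕ => r (i : ZMod ((k ^ 2 + 1) / 2))) ∪
  (Finset.Icc 0 ((k - 3) / 2)).image (fun i : ℕ => sr (i : ZMod ((k ^ 2 + 1) / 2)))

/-- The set `A₂ = {b^{ik} : 1 ≤ i ≤ (k-1)/2} ∪ {a b^{ik+(k-1)/2} : 0 ≤ i ≤ (k-1)/2}`. -/
def dihA2 (k : ℕ) : Finset (DihedralGroup ((k ^ 2 + 1) / 2)) :=
  (Finset.Icc 1 ((k - 1) / 2)).image (fun i : ℕ => r ((i * k : ℕ) : ZMod ((k ^ 2 + 1) / 2))) ∪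
  (Finset.Icc 0 ((k - 1) / 2)).image
    (fun i : ℕ => sr ((i * k + (k - 1) / 2 : ℕ) : ZMod ((k ^ 2 + 1) / 2)))

/-- `(S, T)` is a near factorization of the group `G`: every element of `G` other than the
identity is expressed exactly once as a product `s * t` with `s ∈ S`, `t ∈ T`, and the
identity is never so expressed. -/
def IsNearFactorization {G : Type*} [Group G] (S T : Finset G) : Prop :=
  (∀ s ∈ S, ∀ t ∈ T, s * t ≠ 1) ∧
  (∀ g : G, g ≠ 1 → ∃! p : G × G, p.1 ∈ S ∧ p.2 ∈ T ∧ p.1 * p.2 = g)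

private lemma inv_r' {n : ℕ} (i : ZMod n) : (r i)⁻¹ = r (-i) := rfl
private lemma inv_sr' {n : ℕ} (i : ZMod n) : (sr i)⁻¹ = sr i := rfl

/-- shifting a near factorization -/
private lemma nf_shift {G : Type*} [Group G] [DecidableEq G] {S T : Finset G} (x : G)
    (hST : IsNearFactorization S T) :
    IsNearFactorization (S.image (fun s => s * x)) (T.image (fun t => x⁻¹ * t)) := by
  obtain ⟨h1, h2⟩ := hST
  constructor
  · intro s hs t ht
    simp only [Finset.mem_image] at hs ht
    obtain ⟨s0, hs0, rfl⟩ := hs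
    obtain ⟨t0, ht0, rfl⟩ := ht
    have := h1 s0 hs0 t0 ht0
    simpa [mul_assoc] using this
  · intro g hg
    obtain ⟨p, ⟨hp1, hp2, hp3⟩, hu⟩ := h2 g hg
    refine ⟨(p.1 * x, x⁻¹ * p.2), ⟨Finset.mem_image_of_mem _ hp1,
      Finset.mem_image_of_mem _ hp2, by
        simp only []
        rw [mul_assoc, ← mul_assoc x, mul_inv_cancel, one_mul, hp3]⟩, ?_⟩
    rintro ⟨q1, q2⟩ ⟨hq1, hq2, hq3⟩
    simp only [Finset.mem_image] at hq1 hq2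
    obtain ⟨s0, hs0, rfl⟩ := hq1
    obtain ⟨t0, ht0, rfl⟩ := hq2
    have hst : (s0, t0) = p := by
      refine hu (s0, t0) ⟨hs0, ht0, ?_⟩
      simp only [] at hq3 ⊢
      rw [← hq3, mul_assoc, ← mul_assoc x, mul_inv_cancel, one_mul]
    rw [← hst]

theorem stmt_19 (k : ℕ) (hk : 3 ≤ k) (hodd : Odd k) :
    ∀ h : DihedralGroup ((k ^ 2 + 1) / 2),
      h = sr ((((k - 1) / 2 : ℕ)) : ZMod ((k ^ 2 + 1) / 2)) →
      ((dihA1 k).image (fun g => g * h) = dihA k) ∧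
      (((dihA2 k).image (fun g => g * h)).image (fun g => g⁻¹) = dihB k) ∧
      (((dihA2 k).image (fun g => g⁻¹)).image (fun g => h⁻¹ * g) = dihB k) ∧
      IsNearFactorization (dihA k) (dihB k) ∧
      IsNearFactorization (dihA1 k) ((dihA2 k).image (fun g => g⁻¹)) ∧
      (∃ g₀ h₀ : DihedralGroup ((k ^ 2 + 1) / 2),
        dihA k = (dihA1 k).image (fun s => g₀ * s * h₀) ∧
        dihB k = ((dihA2 k).image (fun g => g⁻¹)).image (fun t => h₀⁻¹ * t * g₀⁻¹)) := by
  intro h hh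
  obtain ⟨m, hm⟩ := hodd
  have hm1 : 1 ≤ m := by omega
  have hn : (k ^ 2 + 1) / 2 = 2 * m * m + 2 * m + 1 := by
    have h2 : k ^ 2 + 1 = 2 * (2 * m * m + 2 * m + 1) := by subst hm; ring
    omega
  have hkm : (k - 1) / 2 = m := by omega
  have hkm3 : (k - 3) / 2 = m - 1 := by omega
  have hmk : m * k + m + 1 = (k ^ 2 + 1) / 2 := by
    have : m * k = 2 * m * m + m := by rw [hm]; ring
    omega
  have hkpos : 0 < k := by omega
  haveI : NeZero ((k ^ 2 + 1) / 2) := ⟨by omega⟩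
  -- cast injectivity
  have castinj : ∀ x y : ℕ, x < (k ^ 2 + 1) / 2 → y < (k ^ 2 + 1) / 2 →
      ((x : ZMod ((k ^ 2 + 1) / 2)) = (y : ZMod ((k ^ 2 + 1) / 2))) → x = y := by
    intro x y hx hy hxy
    have := congrArg ZMod.val hxy
    rwa [ZMod.val_cast_of_lt hx, ZMod.val_cast_of_lt hy] at this
  have hzero : (((k ^ 2 + 1) / 2 : ℕ) : ZMod ((k ^ 2 + 1) / 2)) = 0 := ZMod.natCast_self _
  have hbound : ∀ j : ℕ, j ≤ m → j * k ≤ m * k := fun j hj => Nat.mul_le_mul_right k hj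
  -- unique division decomposition
  have hdiv : ∀ i j i' j' : ℕ, i < k → i' < k → i + j * k = i' + j' * k → i = i' ∧ j = j' := by
    intro i j i' j' hi hi' e
    have hj : j = j' := by
      rcases lt_trichotomy j j' with hlt | heq | hgt
      · exfalso
        have h1 : (j + 1) * k ≤ j' * k := Nat.mul_le_mul_right k hlt
        have h2 : (j + 1) * k = j * k + k := by ring
        omega
      · exact heq
      · exfalso
        have h1 : (j' + 1) * k ≤ j * k := Nat.mul_le_mul_right k hgt
        have h2 : (j' + 1) * k = j' * k + k := by ring
        omega
    subst hj
    omega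
  -- Part 1 : A1 * h = A
  have part1 : (dihA1 k).image (fun g => g * h) = dihA k := by
    subst hh
    ext g
    simp only [dihA1, dihA, Finset.image_union, Finset.image_image, Function.comp,
      Finset.mem_union, Finset.mem_image, Finset.mem_Icc, hkm, hkm3, r_mul_sr, sr_mul_sr,
      Nat.zero_le, true_and]
    constructor
    · rintro (⟨i, hi, rfl⟩ | ⟨i, hi, rfl⟩)
      · right
        refine ⟨m - i, by omega, ?_⟩
        rw [Nat.cast_sub hi]
      · left
        refine ⟨m - i, ⟨by omega, by omega⟩, ?_⟩
        rw [Nat.cast_sub (by omega)]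
    · rintro (⟨i, ⟨hi1, hi2⟩, rfl⟩ | ⟨i, hi, rfl⟩)
      · right
        refine ⟨m - i, by omega, ?_⟩
        rw [Nat.cast_sub (by omega : i ≤ m), sub_sub_cancel]
      · left
        refine ⟨m - i, by omega, ?_⟩
        rw [Nat.cast_sub (by omega : i ≤ m), sub_sub_cancel]
  -- Part 3 : h⁻¹ * A2⁻¹ = B
  have part3 : ((dihA2 k).image (fun g => g⁻¹)).image (fun g => h⁻¹ * g) = dihB k := by
    subst hh
    rw [Finset.image_image]
    have keyc : ∀ j : ℕ, 1 ≤ j → j ≤ m →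
        (((m + 1 - j) * k : ℕ) : ZMod ((k ^ 2 + 1) / 2)) + ((j * k : ℕ) : ZMod _) =
          (m : ZMod ((k ^ 2 + 1) / 2)) := by
      intro j hj1 hj2
      have hnat : (m + 1 - j) * k + j * k = (k ^ 2 + 1) / 2 + m := by
        have e1 : (m + 1 - j) * k + j * k = (m + 1) * k := by
          rw [← Nat.add_mul]; congr 1; omega
        have e2 : (m + 1) * k = 2 * m * m + 3 * m + 1 := by rw [hm]; ring
        omega
      calc (((m + 1 - j) * k : ℕ) : ZMod ((k ^ 2 + 1) / 2)) + ((j * k : ℕ) : ZMod _)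
          = (((m + 1 - j) * k + j * k : ℕ) : ZMod ((k ^ 2 + 1) / 2)) := (Nat.cast_add _ _).symm
        _ = (((k ^ 2 + 1) / 2 + m : ℕ) : ZMod ((k ^ 2 + 1) / 2)) := by rw [hnat]
        _ = (m : ZMod ((k ^ 2 + 1) / 2)) := by rw [Nat.cast_add, hzero, zero_add]
    ext g
    simp only [dihA2, dihB, Finset.image_union, Finset.image_image, Function.comp,
      Finset.mem_union, Finset.mem_image, Finset.mem_Icc, hkm, inv_sr', inv_r',
      sr_mul_r, sr_mul_sr, Nat.zero_le, true_and]
    constructor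
    · rintro (⟨j, ⟨hj1, hj2⟩, rfl⟩ | ⟨j, hj, rfl⟩)
      · right
        refine ⟨m + 1 - j, ⟨by omega, by omega⟩, ?_⟩
        congr 1
        linear_combination keyc j hj1 hj2
      · left
        refine ⟨j, hj, ?_⟩
        congr 1
        push_cast
        ring
    · rintro (⟨j, hj, rfl⟩ | ⟨j, ⟨hj1, hj2⟩, rfl⟩)
      · right
        refine ⟨j, hj, ?_⟩
        congr 1
        push_cast
        ring
      · left
        refine ⟨m + 1 - j, ⟨by omega, by omega⟩, ?_⟩
        have hk2 : (m + 1 - (m + 1 - j)) = j := by omega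
        have h1 := keyc (m + 1 - j) (by omega) (by omega)
        rw [hk2] at h1
        congr 1
        linear_combination -h1
  -- Part 2 from part 3
  have part2 : ((dihA2 k).image (fun g => g * h)).image (fun g => g⁻¹) = dihB k := by
    rw [← part3, Finset.image_image, Finset.image_image]
    congr 1
    funext g
    simp [mul_inv_rev]
  -- membership characterizations
  have memA : ∀ g, g ∈ dihA k ↔
      (∃ i, (1 ≤ i ∧ i ≤ m) ∧ r (i : ZMod ((k ^ 2 + 1) / 2)) = g) ∨
      (∃ i, i ≤ m ∧ sr (i : ZMod ((k ^ 2 + 1) / 2)) = g) := by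
    intro g
    simp [dihA, Finset.mem_union, Finset.mem_image, Finset.mem_Icc, hkm]
  have memB : ∀ g, g ∈ dihB k ↔
      (∃ j, j ≤ m ∧ r ((j * k : ℕ) : ZMod ((k ^ 2 + 1) / 2)) = g) ∨
      (∃ j, (1 ≤ j ∧ j ≤ m) ∧ sr ((j * k : ℕ) : ZMod ((k ^ 2 + 1) / 2)) = g) := by
    intro g
    simp [dihB, Finset.mem_union, Finset.mem_image, Finset.mem_Icc, hkm]
  have part4 : IsNearFactorization (dihA k) (dihB k) := by
    constructor
    · -- no product is the identity
      intro s hs t ht heq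
      rw [memA] at hs
      rw [memB] at ht
      rcases hs with ⟨i, ⟨hi1, hi2⟩, rfl⟩ | ⟨i, hi, rfl⟩ <;>
        rcases ht with ⟨j, hj, rfl⟩ | ⟨j, ⟨hj1, hj2⟩, rfl⟩
      · rw [r_mul_r, ← Nat.cast_add, one_def] at heq
        have hb := hbound j hj
        have h0 := castinj (i + j * k) 0 (by omega) (by omega)
          (by rw [Nat.cast_zero]; exact r.inj heq)
        omega
      · simp [one_def, -r_zero] at heq
      · simp [one_def, -r_zero] at heq
      · rw [sr_mul_sr, one_def] at heq
        have h1 : ((j * k : ℕ) : ZMod ((k ^ 2 + 1) / 2)) = ((i : ℕ) : ZMod ((k ^ 2 + 1) / 2)) := by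
          have h2 := r.inj heq
          have h3 := congrArg (· + (i : ZMod ((k ^ 2 + 1) / 2))) h2
          simpa using h3
        have hb := hbound j hj2
        have hlo : k ≤ j * k := by calc k = 1 * k := (one_mul k).symm
                                        _ ≤ j * k := Nat.mul_le_mul_right k hj1
        have := castinj (j * k) i (by omega) (by omega) h1
        omega
    · intro g hg
      -- key decomposition lemmas
      have keyr : ∀ (v : ℕ), v < (k ^ 2 + 1) / 2 → ∀ p1 p2 : DihedralGroup ((k ^ 2 + 1) / 2),
          p1 ∈ dihA k → p2 ∈ dihB k → p1 * p2 = r (v : ZMod ((k ^ 2 + 1) / 2)) →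
          (∃ i j, 1 ≤ i ∧ i ≤ m ∧ j ≤ m ∧ p1 = r (i : ZMod _) ∧
            p2 = r ((j * k : ℕ) : ZMod _) ∧ v = i + j * k) ∨
          (∃ i j, i ≤ m ∧ 1 ≤ j ∧ j ≤ m ∧ p1 = sr (i : ZMod _) ∧
            p2 = sr ((j * k : ℕ) : ZMod _) ∧ v + i = j * k) := by
        intro v hv p1 p2 hp1 hp2 hprod
        rw [memA] at hp1
        rw [memB] at hp2
        rcases hp1 with ⟨i, ⟨hi1, hi2⟩, rfl⟩ | ⟨i, hi, rfl⟩ <;>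
          rcases hp2 with ⟨j, hj, rfl⟩ | ⟨j, ⟨hj1, hj2⟩, rfl⟩
        · left
          rw [r_mul_r, ← Nat.cast_add] at hprod
          have hb := hbound j hj
          have := castinj (i + j * k) v (by omega) hv (r.inj hprod)
          exact ⟨i, j, hi1, hi2, hj, rfl, rfl, by omega⟩
        · simp at hprod
        · simp at hprod
        · right
          rw [sr_mul_sr] at hprod
          have heq2 : ((j * k : ℕ) : ZMod ((k ^ 2 + 1) / 2)) = ((v + i : ℕ) : _) := by
            have h3 := congrArg (· + (i : ZMod ((k ^ 2 + 1) / 2))) (r.inj hprod)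
            push_cast
            simpa using h3
          have hb := hbound j hj2
          have hlo : k ≤ j * k := by calc k = 1 * k := (one_mul k).symm
                                          _ ≤ j * k := Nat.mul_le_mul_right k hj1
          have hmod : (j * k) % ((k ^ 2 + 1) / 2) = (v + i) % ((k ^ 2 + 1) / 2) := by
            rwa [ZMod.natCast_eq_natCast_iff] at heq2
          rw [Nat.mod_eq_of_lt (by omega)] at hmod
          by_cases hcase : v + i < (k ^ 2 + 1) / 2
          · rw [Nat.mod_eq_of_lt hcase] at hmod
            exact ⟨i, j, hi, hj1, hj2, rfl, rfl, by omega⟩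
          · exfalso
            have hsub : (v + i) % ((k ^ 2 + 1) / 2) = v + i - (k ^ 2 + 1) / 2 := by
              rw [Nat.mod_eq_sub_mod (le_of_not_gt hcase), Nat.mod_eq_of_lt (by omega)]
            omega
      have keysr : ∀ (v : ℕ), v < (k ^ 2 + 1) / 2 → ∀ p1 p2 : DihedralGroup ((k ^ 2 + 1) / 2),
          p1 ∈ dihA k → p2 ∈ dihB k → p1 * p2 = sr (v : ZMod ((k ^ 2 + 1) / 2)) →
          (∃ i j, i ≤ m ∧ j ≤ m ∧ p1 = sr (i : ZMod _) ∧
            p2 = r ((j * k : ℕ) : ZMod _) ∧ v = i + j * k) ∨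
          (∃ i j, 1 ≤ i ∧ i ≤ m ∧ 1 ≤ j ∧ j ≤ m ∧ p1 = r (i : ZMod _) ∧
            p2 = sr ((j * k : ℕ) : ZMod _) ∧ v + i = j * k) := by
        intro v hv p1 p2 hp1 hp2 hprod
        rw [memA] at hp1
        rw [memB] at hp2
        rcases hp1 with ⟨i, ⟨hi1, hi2⟩, rfl⟩ | ⟨i, hi, rfl⟩ <;>
          rcases hp2 with ⟨j, hj, rfl⟩ | ⟨j, ⟨hj1, hj2⟩, rfl⟩
        · simp at hprod
        · right
          rw [r_mul_sr] at hprod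
          have heq2 : ((j * k : ℕ) : ZMod ((k ^ 2 + 1) / 2)) = ((v + i : ℕ) : _) := by
            have h3 := congrArg (· + (i : ZMod ((k ^ 2 + 1) / 2))) (sr.inj hprod)
            push_cast
            simpa using h3
          have hb := hbound j hj2
          have hlo : k ≤ j * k := by calc k = 1 * k := (one_mul k).symm
                                          _ ≤ j * k := Nat.mul_le_mul_right k hj1
          have hmod : (j * k) % ((k ^ 2 + 1) / 2) = (v + i) % ((k ^ 2 + 1) / 2) := by
            rwa [ZMod.natCast_eq_natCast_iff] at heq2
          rw [Nat.mod_eq_of_lt (by omega)] at hmod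
          by_cases hcase : v + i < (k ^ 2 + 1) / 2
          · rw [Nat.mod_eq_of_lt hcase] at hmod
            exact ⟨i, j, hi1, hi2, hj1, hj2, rfl, rfl, by omega⟩
          · exfalso
            have hsub : (v + i) % ((k ^ 2 + 1) / 2) = v + i - (k ^ 2 + 1) / 2 := by
              rw [Nat.mod_eq_sub_mod (le_of_not_gt hcase), Nat.mod_eq_of_lt (by omega)]
            omega
        · left
          rw [sr_mul_r, ← Nat.cast_add] at hprod
          have hb := hbound j hj
          have := castinj (i + j * k) v (by omega) hv (sr.inj hprod)
          exact ⟨i, j, hi, hj, rfl, rfl, by omega⟩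
        · simp at hprod
      rcases g with c | c
      · -- rotation target
        have hc0 : c ≠ 0 := by simpa [one_def, -r_zero] using hg
        set v := c.val with hvdef
        have hvlt : v < (k ^ 2 + 1) / 2 := ZMod.val_lt c
        have hvpos : v ≠ 0 := fun hz => hc0 ((ZMod.val_eq_zero c).mp hz)
        have hcv : ((v : ℕ) : ZMod ((k ^ 2 + 1) / 2)) = c := by
          rw [hvdef, ZMod.natCast_val, ZMod.cast_id]
        obtain ⟨t, q, hvtq, htk⟩ : ∃ t q : ℕ, t + q * k = v ∧ t < k :=
          ⟨v % k, v / k, Nat.mod_add_div' v k, Nat.mod_lt v hkpos⟩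
        have hq : q ≤ m := by
          by_contra hcon
          have h1 : (m + 1) * k ≤ q * k := Nat.mul_le_mul_right k (by omega)
          have h2 : (m + 1) * k = m * k + k := by ring
          omega
        by_cases ht1 : 1 ≤ t ∧ t ≤ m
        · refine ⟨(r (t : ZMod _), r ((q * k : ℕ) : ZMod _)), ⟨?_, ?_, ?_⟩, ?_⟩
          · rw [memA]; exact Or.inl ⟨t, ht1, rfl⟩
          · rw [memB]; exact Or.inl ⟨q, hq, rfl⟩
          · show r _ * r _ = r c
            rw [r_mul_r, ← Nat.cast_add, hvtq, hcv]
          · rintro ⟨p1, p2⟩ ⟨hp1, hp2, hprod⟩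
            rw [← hcv] at hprod
            rcases keyr v hvlt p1 p2 hp1 hp2 hprod with
              ⟨i, j, hi1, hi2, hj, rfl, rfl, he⟩ | ⟨i, j, hi, hj1, hj2, rfl, rfl, he⟩
            · obtain ⟨e1, e2⟩ := hdiv i j t q (by omega) (by omega) (by omega)
              rw [e1, e2]
            · exfalso
              rcases Nat.eq_zero_or_pos i with hi0 | hipos
              · subst hi0
                have hv0 : v = 0 + j * k := by omega
                obtain ⟨e1, e2⟩ := hdiv t q 0 j (by omega) (by omega) (by omega)
                omega
              · obtain ⟨j', rfl⟩ : ∃ j', j = j' + 1 := ⟨j - 1, by omega⟩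
                have hjk : (j' + 1) * k = j' * k + k := by ring
                obtain ⟨e1, e2⟩ := hdiv t q (k - i) j' (by omega) (by omega) (by omega)
                omega
        · by_cases ht0 : t = 0
          · have hq1 : 1 ≤ q := by
              rcases Nat.eq_zero_or_pos q with h0 | h1
              · exfalso
                rw [h0, zero_mul, add_zero] at hvtq
                omega
              · exact h1
            refine ⟨(sr ((0 : ℕ) : ZMod _), sr ((q * k : ℕ) : ZMod _)), ⟨?_, ?_, ?_⟩, ?_⟩
            · rw [memA]; exact Or.inr ⟨0, by omega, rfl⟩
            · rw [memB]; exact Or.inr ⟨q, ⟨hq1, hq⟩, rfl⟩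
            · show sr _ * sr _ = r c
              rw [sr_mul_sr, Nat.cast_zero, sub_zero, show q * k = v from by omega, hcv]
            · rintro ⟨p1, p2⟩ ⟨hp1, hp2, hprod⟩
              rw [← hcv] at hprod
              rcases keyr v hvlt p1 p2 hp1 hp2 hprod with
                ⟨i, j, hi1, hi2, hj, rfl, rfl, he⟩ | ⟨i, j, hi, hj1, hj2, rfl, rfl, he⟩
              · exfalso
                obtain ⟨e1, e2⟩ := hdiv t q i j (by omega) (by omega) (by omega)
                omega
              · rcases Nat.eq_zero_or_pos i with hi0 | hipos
                · subst hi0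
                  have hv0 : v = 0 + j * k := by omega
                  obtain ⟨e1, e2⟩ := hdiv t q 0 j (by omega) (by omega) (by omega)
                  rw [e2]
                · exfalso
                  obtain ⟨j', rfl⟩ : ∃ j', j = j' + 1 := ⟨j - 1, by omega⟩
                  have hjk : (j' + 1) * k = j' * k + k := by ring
                  obtain ⟨e1, e2⟩ := hdiv t q (k - i) j' (by omega) (by omega) (by omega)
                  omega
          · -- t ≥ m + 1
            have htm : m + 1 ≤ t := by omega
            have hqm : q + 1 ≤ m := by
              by_contra hcon
              have h1 : m * k ≤ q * k := Nat.mul_le_mul_right k (by omega)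
              omega
            have hq1k : (q + 1) * k = q * k + k := by ring
            refine ⟨(sr ((k - t : ℕ) : ZMod _), sr (((q + 1) * k : ℕ) : ZMod _)),
              ⟨?_, ?_, ?_⟩, ?_⟩
            · rw [memA]; exact Or.inr ⟨k - t, by omega, rfl⟩
            · rw [memB]; exact Or.inr ⟨q + 1, ⟨by omega, hqm⟩, rfl⟩
            · show sr _ * sr _ = r c
              rw [sr_mul_sr, ← Nat.cast_sub (show k - t ≤ (q + 1) * k by omega),
                show (q + 1) * k - (k - t) = v from by omega, hcv]
            · rintro ⟨p1, p2⟩ ⟨hp1, hp2, hprod⟩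
              rw [← hcv] at hprod
              rcases keyr v hvlt p1 p2 hp1 hp2 hprod with
                ⟨i, j, hi1, hi2, hj, rfl, rfl, he⟩ | ⟨i, j, hi, hj1, hj2, rfl, rfl, he⟩
              · exfalso
                obtain ⟨e1, e2⟩ := hdiv t q i j (by omega) (by omega) (by omega)
                omega
              · rcases Nat.eq_zero_or_pos i with hi0 | hipos
                · exfalso
                  subst hi0
                  have hv0 : v = 0 + j * k := by omega
                  obtain ⟨e1, e2⟩ := hdiv t q 0 j (by omega) (by omega) (by omega)
                  omega
                · obtain ⟨j', rfl⟩ : ∃ j', j = j' + 1 := ⟨j - 1, by omega⟩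
                  have hjk : (j' + 1) * k = j' * k + k := by ring
                  obtain ⟨e1, e2⟩ := hdiv t q (k - i) j' (by omega) (by omega) (by omega)
                  have hieq : i = k - t := by omega
                  rw [hieq, e2]
      · -- reflection target
        set v := c.val with hvdef
        have hvlt : v < (k ^ 2 + 1) / 2 := ZMod.val_lt c
        have hcv : ((v : ℕ) : ZMod ((k ^ 2 + 1) / 2)) = c := by
          rw [hvdef, ZMod.natCast_val, ZMod.cast_id]
        obtain ⟨t, q, hvtq, htk⟩ : ∃ t q : ℕ, t + q * k = v ∧ t < k :=
          ⟨v % k, v / k, Nat.mod_add_div' v k, Nat.mod_lt v hkpos⟩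
        have hq : q ≤ m := by
          by_contra hcon
          have h1 : (m + 1) * k ≤ q * k := Nat.mul_le_mul_right k (by omega)
          have h2 : (m + 1) * k = m * k + k := by ring
          omega
        by_cases ht1 : t ≤ m
        · refine ⟨(sr (t : ZMod _), r ((q * k : ℕ) : ZMod _)), ⟨?_, ?_, ?_⟩, ?_⟩
          · rw [memA]; exact Or.inr ⟨t, ht1, rfl⟩
          · rw [memB]; exact Or.inl ⟨q, hq, rfl⟩
          · show sr _ * r _ = sr c
            rw [sr_mul_r, ← Nat.cast_add, hvtq, hcv]
          · rintro ⟨p1, p2⟩ ⟨hp1, hp2, hprod⟩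
            rw [← hcv] at hprod
            rcases keysr v hvlt p1 p2 hp1 hp2 hprod with
              ⟨i, j, hi, hj, rfl, rfl, he⟩ | ⟨i, j, hi1, hi2, hj1, hj2, rfl, rfl, he⟩
            · obtain ⟨e1, e2⟩ := hdiv i j t q (by omega) (by omega) (by omega)
              rw [e1, e2]
            · exfalso
              obtain ⟨j', rfl⟩ : ∃ j', j = j' + 1 := ⟨j - 1, by omega⟩
              have hjk : (j' + 1) * k = j' * k + k := by ring
              obtain ⟨e1, e2⟩ := hdiv t q (k - i) j' (by omega) (by omega) (by omega)
              omega
        · have htm : m + 1 ≤ t := by omega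
          have hqm : q + 1 ≤ m := by
            by_contra hcon
            have h1 : m * k ≤ q * k := Nat.mul_le_mul_right k (by omega)
            omega
          have hq1k : (q + 1) * k = q * k + k := by ring
          refine ⟨(r ((k - t : ℕ) : ZMod _), sr (((q + 1) * k : ℕ) : ZMod _)),
            ⟨?_, ?_, ?_⟩, ?_⟩
          · rw [memA]; exact Or.inl ⟨k - t, ⟨by omega, by omega⟩, rfl⟩
          · rw [memB]; exact Or.inr ⟨q + 1, ⟨by omega, hqm⟩, rfl⟩
          · show r _ * sr _ = sr c
            rw [r_mul_sr, ← Nat.cast_sub (show k - t ≤ (q + 1) * k by omega),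
              show (q + 1) * k - (k - t) = v from by omega, hcv]
          · rintro ⟨p1, p2⟩ ⟨hp1, hp2, hprod⟩
            rw [← hcv] at hprod
            rcases keysr v hvlt p1 p2 hp1 hp2 hprod with
              ⟨i, j, hi, hj, rfl, rfl, he⟩ | ⟨i, j, hi1, hi2, hj1, hj2, rfl, rfl, he⟩
            · exfalso
              obtain ⟨e1, e2⟩ := hdiv t q i j (by omega) (by omega) (by omega)
              omega
            · obtain ⟨j', rfl⟩ : ∃ j', j = j' + 1 := ⟨j - 1, by omega⟩
              have hjk : (j' + 1) * k = j' * k + k := by ring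
              obtain ⟨e1, e2⟩ := hdiv t q (k - i) j' (by omega) (by omega) (by omega)
              have hieq : i = k - t := by omega
              rw [hieq, e2]
  -- Part 5 : near factorization (A1, A2⁻¹) via shifting
  have hA1 : dihA1 k = (dihA k).image (fun s => s * h⁻¹) := by
    rw [← part1, Finset.image_image]
    have hcomp : ((fun s => s * h⁻¹) ∘ fun g => g * h) = id := by
      funext g
      simp [Function.comp, mul_assoc]
    rw [hcomp, Finset.image_id]
  have hA2inv : (dihA2 k).image (fun g => g⁻¹) = (dihB k).image (fun t => h⁻¹⁻¹ * t) := by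
    rw [← part3, Finset.image_image]
    have hcomp : ((fun t => h⁻¹⁻¹ * t) ∘ fun g => h⁻¹ * g) = id := by
      funext g
      simp [Function.comp, ← mul_assoc]
    rw [hcomp, Finset.image_id]
  have part5 : IsNearFactorization (dihA1 k) ((dihA2 k).image (fun g => g⁻¹)) := by
    rw [hA1, hA2inv]
    exact nf_shift h⁻¹ part4
  refine ⟨part1, part2, part3, part4, part5, 1, h, ?_, ?_⟩
  · rw [← part1]
    congr 1
    funext s
    rw [one_mul]
  · rw [← part3]
    congr 1
    funext t
    rw [inv_one, mul_one]
end
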